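/- arXiv:1802.06363 — 10 statements merged into one kernel-verified Lean document; each statement's English description precedes it below -/
import Mathlib

section
/- Let (f_k)_{k∈ℕ} be a Bessel sequence in a Hilbert space H₁ with bound B, (g_k)_{k∈ℕ} a Bessel sequence in a Hilbert space H₂ with bound B', and m = (m_k) ∈ ℓ^∞. Then the Bessel multiplier M_{m,(g_k),(f_k)} f = ∑_k m_k ⟨f, f_k⟩ g_k is a well-defined bounded linear operator from H₁ to H₂ with ‖M_{m,(g_k),(f_k)}‖ ≤ √(BB')·‖m‖_∞, and for every f ∈ H₁ the series ∑_k m_k ⟨f, f_k⟩ g_k converges unconditionally in H₂. -/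
noncomputable section
open scoped ENNReal

private lemma finset_synth_bound
    {H₂ : Type*} [NormedAddCommGroup H₂] [InnerProductSpace ℂ H₂]
    (g : ℕ → H₂) (B' : ℝ) (hB' : 0 ≤ B')
    (hg : ∀ y : H₂, Summable (fun k => ‖(inner ℂ (g k) y : ℂ)‖ ^ 2) ∧
      ∑' k, ‖(inner ℂ (g k) y : ℂ)‖ ^ 2 ≤ B' * ‖y‖ ^ 2)
    (c : ℕ → ℂ) (F : Finset ℕ) :
    ‖∑ k ∈ F, c k • g k‖ ≤ Real.sqrt B' * Real.sqrt (∑ k ∈ F, ‖c k‖ ^ 2) := by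
  set s := ∑ k ∈ F, c k • g k with hs
  have h1 : (inner ℂ s s : ℂ) = ∑ k ∈ F, (starRingEnd ℂ) (c k) * inner ℂ (g k) s := by
    rw [hs, sum_inner]
    simp only [inner_smul_left]
  have h2 : ‖s‖ ^ 2 ≤ ∑ k ∈ F, ‖c k‖ * ‖(inner ℂ (g k) s : ℂ)‖ := by
    have : ‖s‖ ^ 2 = ‖(inner ℂ s s : ℂ)‖ := by
      rw [@inner_self_eq_norm_sq_to_K ℂ]
      simp
    rw [this, h1]
    refine (norm_sum_le _ _).trans ?_
    refine Finset.sum_le_sum fun k _ => ?_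
    rw [norm_mul, RingHomIsometric.norm_map]
  have hcs : ∑ k ∈ F, ‖c k‖ * ‖(inner ℂ (g k) s : ℂ)‖ ≤
      Real.sqrt (∑ k ∈ F, ‖c k‖ ^ 2) * Real.sqrt (∑ k ∈ F, ‖(inner ℂ (g k) s : ℂ)‖ ^ 2) := by
    have h := Finset.sum_mul_sq_le_sq_mul_sq F (fun k => ‖c k‖) (fun k => ‖(inner ℂ (g k) s : ℂ)‖)
    have hnn : 0 ≤ ∑ k ∈ F, ‖c k‖ * ‖(inner ℂ (g k) s : ℂ)‖ :=
      Finset.sum_nonneg fun k _ => mul_nonneg (norm_nonneg _) (norm_nonneg _)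
    have := Real.sqrt_le_sqrt h
    rwa [Real.sqrt_sq hnn, Real.sqrt_mul (Finset.sum_nonneg fun k _ => sq_nonneg _)] at this
  have hsum : ∑ k ∈ F, ‖(inner ℂ (g k) s : ℂ)‖ ^ 2 ≤ B' * ‖s‖ ^ 2 :=
    le_trans (Summable.sum_le_tsum F (fun k _ => sq_nonneg _) (hg s).1) (hg s).2
  have h3 : ‖s‖ ^ 2 ≤ Real.sqrt (∑ k ∈ F, ‖c k‖ ^ 2) * (Real.sqrt B' * ‖s‖) := by
    refine h2.trans (hcs.trans ?_)
    have : Real.sqrt (∑ k ∈ F, ‖(inner ℂ (g k) s : ℂ)‖ ^ 2) ≤ Real.sqrt B' * ‖s‖ := by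
      refine (Real.sqrt_le_sqrt hsum).trans ?_
      rw [Real.sqrt_mul hB', Real.sqrt_sq (norm_nonneg _)]
    exact mul_le_mul_of_nonneg_left this (Real.sqrt_nonneg _)
  rcases eq_or_lt_of_le (norm_nonneg s) with h0 | h0
  · rw [← h0]
    positivity
  · have := h3
    rw [sq] at this
    have h4 : ‖s‖ * ‖s‖ ≤ (Real.sqrt B' * Real.sqrt (∑ k ∈ F, ‖c k‖ ^ 2)) * ‖s‖ := by
      calc ‖s‖ * ‖s‖ ≤ Real.sqrt (∑ k ∈ F, ‖c k‖ ^ 2) * (Real.sqrt B' * ‖s‖) := this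
        _ = (Real.sqrt B' * Real.sqrt (∑ k ∈ F, ‖c k‖ ^ 2)) * ‖s‖ := by ring
    exact le_of_mul_le_mul_right h4 h0

private lemma synth_summable
    {H₂ : Type*} [NormedAddCommGroup H₂] [InnerProductSpace ℂ H₂] [CompleteSpace H₂]
    (g : ℕ → H₂) (B' : ℝ) (hB' : 0 ≤ B')
    (hg : ∀ y : H₂, Summable (fun k => ‖(inner ℂ (g k) y : ℂ)‖ ^ 2) ∧
      ∑' k, ‖(inner ℂ (g k) y : ℂ)‖ ^ 2 ≤ B' * ‖y‖ ^ 2)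
    (c : ℕ → ℂ) (hc : Summable fun k => ‖c k‖ ^ 2) :
    Summable (fun k => c k • g k) ∧
      ‖∑' k, c k • g k‖ ≤ Real.sqrt B' * Real.sqrt (∑' k, ‖c k‖ ^ 2) := by
  have hsummable : Summable (fun k => c k • g k) := by
    rw [summable_iff_vanishing]
    intro e he
    rcases Metric.mem_nhds_iff.mp he with ⟨ε, hε, hball⟩
    have hv := (summable_iff_vanishing.mp hc) (Metric.ball 0 ((ε / (Real.sqrt B' + 1)) ^ 2))
      (Metric.ball_mem_nhds 0 (by positivity))
    rcases hv with ⟨s, hsv⟩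
    refine ⟨s, fun t ht => ?_⟩
    apply hball
    simp only [Metric.mem_ball, dist_zero_right]
    have h1 := finset_synth_bound g B' hB' hg c t
    have h2 := hsv t ht
    simp only [Metric.mem_ball, dist_zero_right, Real.norm_eq_abs] at h2
    have h2' : ∑ k ∈ t, ‖c k‖ ^ 2 < (ε / (Real.sqrt B' + 1)) ^ 2 := lt_of_abs_lt h2
    have h3 : Real.sqrt (∑ k ∈ t, ‖c k‖ ^ 2) < ε / (Real.sqrt B' + 1) := by
      have := Real.sqrt_lt_sqrt (Finset.sum_nonneg fun k _ => sq_nonneg _) h2'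
      rwa [Real.sqrt_sq (by positivity)] at this
    calc ‖∑ k ∈ t, c k • g k‖ ≤ Real.sqrt B' * Real.sqrt (∑ k ∈ t, ‖c k‖ ^ 2) := h1
      _ < (Real.sqrt B' + 1) * (ε / (Real.sqrt B' + 1)) := by
          apply mul_lt_mul' (by linarith [Real.sqrt_nonneg B']) h3 (Real.sqrt_nonneg _)
          positivity
      _ = ε := by field_simp
  refine ⟨hsummable, ?_⟩
  have htend := hsummable.hasSum
  refine le_of_tendsto htend.norm (Filter.Eventually.of_forall fun F => ?_)
  refine (finset_synth_bound g B' hB' hg c F).trans ?_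
  refine mul_le_mul_of_nonneg_left (Real.sqrt_le_sqrt ?_) (Real.sqrt_nonneg _)
  exact Summable.sum_le_tsum F (fun k _ => sq_nonneg _) hc

/-- If `(f k)` is a Bessel sequence in `H₁` with bound `B`, `(g k)` is a
Bessel sequence in `H₂` with bound `B'`, and `m ∈ ℓ^∞`, then the Bessel multiplier
`f ↦ ∑ k, m k ⟨f, f k⟩ g k` is a well-defined bounded linear operator from `H₁` to `H₂`
with norm at most `√(B B') ‖m‖_∞`, the series converging unconditionally. -/
theorem bessel_multiplier_bounded
    {H₁ H₂ : Type*} [NormedAddCommGroup H₁] [InnerProductSpace ℂ H₁] [CompleteSpace H₁]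
    [NormedAddCommGroup H₂] [InnerProductSpace ℂ H₂] [CompleteSpace H₂]
    (f : ℕ → H₁) (g : ℕ → H₂) (B B' : ℝ) (hB : 0 < B) (hB' : 0 < B')
    (hf : ∀ x : H₁, Summable (fun k => ‖(inner ℂ (f k) x : ℂ)‖ ^ 2) ∧
      ∑' k, ‖(inner ℂ (f k) x : ℂ)‖ ^ 2 ≤ B * ‖x‖ ^ 2)
    (hg : ∀ y : H₂, Summable (fun k => ‖(inner ℂ (g k) y : ℂ)‖ ^ 2) ∧
      ∑' k, ‖(inner ℂ (g k) y : ℂ)‖ ^ 2 ≤ B' * ‖y‖ ^ 2)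
    (m : lp (fun _ : ℕ => ℂ) ∞) :
    ∃ M : H₁ →L[ℂ] H₂,
      ‖M‖ ≤ Real.sqrt (B * B') * ‖m‖ ∧
      ∀ x : H₁, HasSum (fun k => m k • (inner ℂ (f k) x : ℂ) • g k) (M x) := by
  -- coefficients
  set c : H₁ → ℕ → ℂ := fun x k => m k * (inner ℂ (f k) x : ℂ) with hc_def
  have hm : ∀ k, ‖m k‖ ≤ ‖m‖ := fun k => lp.norm_apply_le_norm ENNReal.top_ne_zero m k
  have hc_sum : ∀ x, Summable fun k => ‖c x k‖ ^ 2 := by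
    intro x
    apply Summable.of_nonneg_of_le (fun k => sq_nonneg _)
      (fun k => ?_) ((hf x).1.mul_left (‖m‖ ^ 2))
    simp only [hc_def, norm_mul, mul_pow]
    exact mul_le_mul_of_nonneg_right (pow_le_pow_left₀ (norm_nonneg _) (hm k) 2) (sq_nonneg _)
  have hc_tsum : ∀ x, ∑' k, ‖c x k‖ ^ 2 ≤ ‖m‖ ^ 2 * (B * ‖x‖ ^ 2) := by
    intro x
    calc ∑' k, ‖c x k‖ ^ 2 ≤ ∑' k, ‖m‖ ^ 2 * ‖(inner ℂ (f k) x : ℂ)‖ ^ 2 := by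
          refine Summable.tsum_le_tsum (fun k => ?_) (hc_sum x) ((hf x).1.mul_left _)
          simp only [hc_def, norm_mul, mul_pow]
          exact mul_le_mul_of_nonneg_right (pow_le_pow_left₀ (norm_nonneg _) (hm k) 2) (sq_nonneg _)
      _ = ‖m‖ ^ 2 * ∑' k, ‖(inner ℂ (f k) x : ℂ)‖ ^ 2 := tsum_mul_left
      _ ≤ ‖m‖ ^ 2 * (B * ‖x‖ ^ 2) := mul_le_mul_of_nonneg_left (hf x).2 (sq_nonneg _)
  have key := fun x => synth_summable g B' hB'.le hg (c x) (hc_sum x)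
  have hbound : ∀ x : H₁, ‖∑' k, c x k • g k‖ ≤ (Real.sqrt (B * B') * ‖m‖) * ‖x‖ := by
    intro x
    refine (key x).2.trans ?_
    have h1 : Real.sqrt (∑' k, ‖c x k‖ ^ 2) ≤ ‖m‖ * (Real.sqrt B * ‖x‖) := by
      refine (Real.sqrt_le_sqrt (hc_tsum x)).trans ?_
      rw [Real.sqrt_mul (sq_nonneg _), Real.sqrt_sq (norm_nonneg _),
        Real.sqrt_mul hB.le, Real.sqrt_sq (norm_nonneg _)]
    calc Real.sqrt B' * Real.sqrt (∑' k, ‖c x k‖ ^ 2)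
        ≤ Real.sqrt B' * (‖m‖ * (Real.sqrt B * ‖x‖)) :=
          mul_le_mul_of_nonneg_left h1 (Real.sqrt_nonneg _)
      _ = (Real.sqrt B * Real.sqrt B') * ‖m‖ * ‖x‖ := by ring
      _ = (Real.sqrt (B * B') * ‖m‖) * ‖x‖ := by rw [Real.sqrt_mul hB.le]
  let L : H₁ →ₗ[ℂ] H₂ :=
    { toFun := fun x => ∑' k, c x k • g k
      map_add' := by
        intro x y
        have he : (fun k => c (x + y) k • g k) = fun k => c x k • g k + c y k • g k := by
          funext k
          simp only [hc_def, inner_add_right]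
          rw [mul_add, add_smul]
        simp only [he]
        exact Summable.tsum_add (key x).1 (key y).1
      map_smul' := by
        intro a x
        have he : (fun k => c (a • x) k • g k) = fun k => a • (c x k • g k) := by
          funext k
          simp only [hc_def, inner_smul_right, smul_smul]
          ring_nf
        simp only [he]
        exact Summable.tsum_const_smul a (key x).1 }
  have hC : 0 ≤ Real.sqrt (B * B') * ‖m‖ := mul_nonneg (Real.sqrt_nonneg _) (norm_nonneg _)
  refine ⟨L.mkContinuous (Real.sqrt (B * B') * ‖m‖) hbound,
    LinearMap.mkContinuous_norm_le L hC hbound, fun x => ?_⟩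
  have : (fun k => m k • (inner ℂ (f k) x : ℂ) • g k) = fun k => c x k • g k := by
    funext k
    rw [smul_smul]
  rw [this]
  exact (key x).1.hasSum
end
end

section
/- Let (f_k)_{k∈ℕ} be a Bessel sequence in a Hilbert space H₁ with bound B, (g_k)_{k∈ℕ} a Bessel sequence in a Hilbert space H₂ with bound B', and m = (m_k) a sequence converging to 0 (m ∈ c₀). Then the Bessel multiplier M_{m,(g_k),(f_k)} f = ∑_k m_k ⟨f, f_k⟩ g_k is a compact operator from H₁ to H₂. -/
noncomputable section

open Filter ContinuousLinearMap

lemma my_summable_mul {a b : ℕ → ℝ} (ha : ∀ k, 0 ≤ a k) (hb : ∀ k, 0 ≤ b k)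
    (ha2 : Summable (fun k => a k ^ 2)) (hb2 : Summable (fun k => b k ^ 2)) :
    Summable (fun k => a k * b k) := by
  refine Summable.of_nonneg_of_le (fun k => mul_nonneg (ha k) (hb k))
    (fun k => ?_) ((ha2.add hb2).div_const 2)
  nlinarith [sq_nonneg (a k - b k), ha k, hb k]

lemma my_tsum_CS {a b : ℕ → ℝ} (ha : ∀ k, 0 ≤ a k) (hb : ∀ k, 0 ≤ b k)
    (ha2 : Summable (fun k => a k ^ 2)) (hb2 : Summable (fun k => b k ^ 2)) :
    ∑' k, a k * b k ≤ Real.sqrt (∑' k, a k ^ 2) * Real.sqrt (∑' k, b k ^ 2) := by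
  refine Summable.tsum_le_of_sum_le (my_summable_mul ha hb ha2 hb2) (fun s => ?_)
  calc ∑ i ∈ s, a i * b i ≤ Real.sqrt (∑ i ∈ s, a i ^ 2) * Real.sqrt (∑ i ∈ s, b i ^ 2) :=
        Real.sum_mul_le_sqrt_mul_sqrt s a b
    _ ≤ _ :=
        mul_le_mul (Real.sqrt_le_sqrt (Summable.sum_le_tsum s (fun k _ => sq_nonneg _) ha2))
          (Real.sqrt_le_sqrt (Summable.sum_le_tsum s (fun k _ => sq_nonneg _) hb2))
          (Real.sqrt_nonneg _) (Real.sqrt_nonneg _)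

lemma my_toSpanSingleton_compact {H : Type*} [NormedAddCommGroup H] [NormedSpace ℂ H] (v : H) :
    IsCompactOperator (ContinuousLinearMap.toSpanSingleton ℂ v) := by
  refine ⟨(fun z : ℂ => z • v) '' Metric.closedBall 0 1,
    ((isCompact_closedBall 0 1).image (by continuity)), ?_⟩
  refine Filter.mem_of_superset (Metric.closedBall_mem_nhds 0 one_pos) (fun z hz => ?_)
  exact ⟨z, hz, rfl⟩

lemma my_norm_bound {H₂ : Type*} [NormedAddCommGroup H₂] [InnerProductSpace ℂ H₂]
    (g : ℕ → H₂) (B' : ℝ) (_hB' : 0 ≤ B')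
    (hg : ∀ y : H₂, Summable (fun k => ‖(inner ℂ (g k) y : ℂ)‖ ^ 2) ∧
      ∑' k, ‖(inner ℂ (g k) y : ℂ)‖ ^ 2 ≤ B' * ‖y‖ ^ 2)
    (c : ℕ → ℂ) (hc2 : Summable (fun k => ‖c k‖ ^ 2)) (S : H₂)
    (hS : HasSum (fun k => c k • g k) S) :
    ‖S‖ ≤ Real.sqrt (∑' k, ‖c k‖ ^ 2) * Real.sqrt B' := by
  rcases eq_or_ne S 0 with h | h
  · simp only [h, norm_zero]
    positivity
  have hmap : HasSum (fun k => (inner ℂ S (c k • g k) : ℂ)) (inner ℂ S S : ℂ) :=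
    (innerSL ℂ S).hasSum hS
  have hb2 : Summable (fun k => ‖(inner ℂ (g k) S : ℂ)‖ ^ 2) := (hg S).1
  have hsum : Summable (fun k => ‖c k‖ * ‖(inner ℂ (g k) S : ℂ)‖) :=
    my_summable_mul (fun k => norm_nonneg _) (fun k => norm_nonneg _) hc2 hb2
  have hle : ∀ k, ‖(inner ℂ S (c k • g k) : ℂ)‖ ≤ ‖c k‖ * ‖(inner ℂ (g k) S : ℂ)‖ := by
    intro k
    rw [inner_smul_right, norm_mul, ← inner_conj_symm S, RCLike.norm_conj]
  have h1 : ‖S‖ ^ 2 ≤ ∑' k, ‖c k‖ * ‖(inner ℂ (g k) S : ℂ)‖ := by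
    have heq : (‖S‖ : ℝ) ^ 2 = ‖(inner ℂ S S : ℂ)‖ := by
      rw [inner_self_eq_norm_sq_to_K]; simp [norm_pow]
    rw [heq, ← hmap.tsum_eq]
    refine le_trans (norm_tsum_le_tsum_norm ?_) (Summable.tsum_le_tsum hle ?_ hsum)
    · exact hsum.of_nonneg_of_le (fun k => norm_nonneg _) hle
    · exact hsum.of_nonneg_of_le (fun k => norm_nonneg _) hle
  have h2 : ∑' k, ‖c k‖ * ‖(inner ℂ (g k) S : ℂ)‖ ≤
      Real.sqrt (∑' k, ‖c k‖ ^ 2) * Real.sqrt (B' * ‖S‖ ^ 2) :=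
    le_trans (my_tsum_CS (fun k => norm_nonneg _) (fun k => norm_nonneg _) hc2 hb2)
      (mul_le_mul_of_nonneg_left (Real.sqrt_le_sqrt (hg S).2) (Real.sqrt_nonneg _))
  have hSpos : 0 < ‖S‖ := norm_pos_iff.mpr h
  have h3 : Real.sqrt (B' * ‖S‖ ^ 2) = Real.sqrt B' * ‖S‖ := by
    rw [mul_comm, Real.sqrt_mul (sq_nonneg _), Real.sqrt_sq (norm_nonneg _), mul_comm]
  rw [h3] at h2
  nlinarith [h1.trans h2]

/-- If `(f k)` is a Bessel sequence in `H₁` with bound `B`, `(g k)` is a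
Bessel sequence in `H₂` with bound `B'`, and `m` is a sequence converging to `0`
(i.e. `m ∈ c₀`), then the Bessel multiplier `M : f ↦ ∑ k, m k ⟨f, f k⟩ g k` is a compact
operator from `H₁` to `H₂`. -/
theorem bessel_multiplier_compact_of_c0
    {H₁ H₂ : Type*} [NormedAddCommGroup H₁] [InnerProductSpace ℂ H₁] [CompleteSpace H₁]
    [NormedAddCommGroup H₂] [InnerProductSpace ℂ H₂] [CompleteSpace H₂]
    (f : ℕ → H₁) (g : ℕ → H₂) (B B' : ℝ) (hB : 0 < B) (hB' : 0 < B')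
    (hf : ∀ x : H₁, Summable (fun k => ‖(inner ℂ (f k) x : ℂ)‖ ^ 2) ∧
      ∑' k, ‖(inner ℂ (f k) x : ℂ)‖ ^ 2 ≤ B * ‖x‖ ^ 2)
    (hg : ∀ y : H₂, Summable (fun k => ‖(inner ℂ (g k) y : ℂ)‖ ^ 2) ∧
      ∑' k, ‖(inner ℂ (g k) y : ℂ)‖ ^ 2 ≤ B' * ‖y‖ ^ 2)
    (m : ℕ → ℂ) (hm : Filter.Tendsto m Filter.atTop (nhds 0))
    (M : H₁ →L[ℂ] H₂)
    (hM : ∀ x : H₁, HasSum (fun k => m k • (inner ℂ (f k) x : ℂ) • g k) (M x)) :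
    IsCompactOperator (M : H₁ → H₂) := by
  set T : ℕ → H₁ →L[ℂ] H₂ := fun n =>
    ∑ k ∈ Finset.range n, m k • ((innerSL ℂ (f k)).smulRight (g k)) with hT
  have hTapp : ∀ n x, T n x = ∑ k ∈ Finset.range n, m k • (inner ℂ (f k) x : ℂ) • g k := by
    intro n x
    simp [hT, ContinuousLinearMap.sum_apply]
  have hrank : ∀ k, IsCompactOperator (m k • ((innerSL ℂ (f k)).smulRight (g k)) : H₁ →L[ℂ] H₂) := by
    intro k
    have heq : (((innerSL ℂ (f k)).smulRight (g k) : H₁ →L[ℂ] H₂) : H₁ → H₂) =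
        (ContinuousLinearMap.toSpanSingleton ℂ (g k)) ∘ (innerSL ℂ (f k)) := by
      ext x; simp [ContinuousLinearMap.toSpanSingleton_apply]
    have hc : IsCompactOperator (((innerSL ℂ (f k)).smulRight (g k) : H₁ →L[ℂ] H₂) : H₁ → H₂) := by
      rw [heq]
      exact (my_toSpanSingleton_compact (g k)).comp_clm (innerSL ℂ (f k))
    have := hc.smul (m k)
    exact this
  have hTcompact : ∀ n, IsCompactOperator (T n) := by
    intro n
    induction n with
    | zero => simpa [hT] using isCompactOperator_zero
    | succ n ih =>
        have : T (n+1) = T n + m n • ((innerSL ℂ (f n)).smulRight (g n)) := by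
          simp [hT, Finset.sum_range_succ]
        rw [this]
        exact ih.add (hrank n)
  -- tail bound
  have key : ∀ (ε : ℝ), 0 ≤ ε → ∀ n, (∀ k, n ≤ k → ‖m k‖ ≤ ε) →
      ‖T n - M‖ ≤ ε * Real.sqrt B * Real.sqrt B' := by
    intro ε hε n hn
    refine ContinuousLinearMap.opNorm_le_bound _ (by positivity) (fun x => ?_)
    set c : ℕ → ℂ := fun k => if k ∈ Finset.range n then 0 else m k * (inner ℂ (f k) x : ℂ) with hc
    have hfx := hf x
    have hcle : ∀ k, ‖c k‖ ^ 2 ≤ ε ^ 2 * ‖(inner ℂ (f k) x : ℂ)‖ ^ 2 := by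
      intro k
      simp only [hc]
      by_cases hk : k ∈ Finset.range n
      · rw [if_pos hk, norm_zero, zero_pow two_ne_zero]
        positivity
      · rw [if_neg hk, norm_mul, mul_pow]
        have hmk : ‖m k‖ ≤ ε := hn k (by simpa using hk)
        exact mul_le_mul_of_nonneg_right
          (pow_le_pow_left₀ (norm_nonneg _) hmk 2) (sq_nonneg _)
    have hc2 : Summable (fun k => ‖c k‖ ^ 2) :=
      Summable.of_nonneg_of_le (fun k => sq_nonneg _) hcle (hfx.1.mul_left (ε ^ 2))
    have hctsum : ∑' k, ‖c k‖ ^ 2 ≤ ε ^ 2 * B * ‖x‖ ^ 2 := by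
      calc ∑' k, ‖c k‖ ^ 2 ≤ ∑' k, ε ^ 2 * ‖(inner ℂ (f k) x : ℂ)‖ ^ 2 :=
            Summable.tsum_le_tsum hcle hc2 (hfx.1.mul_left (ε ^ 2))
        _ = ε ^ 2 * ∑' k, ‖(inner ℂ (f k) x : ℂ)‖ ^ 2 := tsum_mul_left
        _ ≤ ε ^ 2 * (B * ‖x‖ ^ 2) := mul_le_mul_of_nonneg_left hfx.2 (sq_nonneg _)
        _ = ε ^ 2 * B * ‖x‖ ^ 2 := by ring
    -- the tail has sum M x - T n x
    have hSsum : HasSum (fun k => c k • g k) (M x - T n x) := by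
      have hfin : HasSum (fun k => if k ∈ Finset.range n then
          m k • (inner ℂ (f k) x : ℂ) • g k else 0) (T n x) := by
        rw [hTapp]
        have h0 := hasSum_sum_of_ne_finset_zero
            (s := Finset.range n) (L := SummationFilter.unconditional ℕ)
            (f := fun k => if k ∈ Finset.range n then m k • (inner ℂ (f k) x : ℂ) • g k else 0)
            (fun k hk => by simp [hk])
        have heq : (∑ k ∈ Finset.range n, if k ∈ Finset.range n then
            m k • (inner ℂ (f k) x : ℂ) • g k else 0) =
            ∑ k ∈ Finset.range n, m k • (inner ℂ (f k) x : ℂ) • g k :=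
          Finset.sum_congr rfl (fun k hk => by rw [if_pos hk])
        rwa [heq] at h0
      have := (hM x).sub hfin
      convert this using 2 with k
      rw [hc]
      by_cases hk : k ∈ Finset.range n
      · simp [hk]
      · simp [hk, smul_smul]
    have hbound := my_norm_bound g B' hB'.le hg c hc2 _ hSsum
    have hsq : Real.sqrt (∑' k, ‖c k‖ ^ 2) ≤ ε * Real.sqrt B * ‖x‖ := by
      have : ε * Real.sqrt B * ‖x‖ = Real.sqrt (ε ^ 2 * B * ‖x‖ ^ 2) := by
        rw [show ε ^ 2 * B * ‖x‖ ^ 2 = (ε * Real.sqrt B * ‖x‖) ^ 2 by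
          rw [mul_pow, mul_pow, Real.sq_sqrt hB.le]]
        rw [Real.sqrt_sq (by positivity)]
      rw [this]
      exact Real.sqrt_le_sqrt hctsum
    have : ‖(T n - M) x‖ ≤ ε * Real.sqrt B * ‖x‖ * Real.sqrt B' := by
      rw [ContinuousLinearMap.sub_apply, norm_sub_rev]
      exact hbound.trans (mul_le_mul_of_nonneg_right hsq (Real.sqrt_nonneg _))
      |>.trans (le_of_eq rfl)
    calc ‖(T n - M) x‖ ≤ ε * Real.sqrt B * ‖x‖ * Real.sqrt B' := this
      _ = ε * Real.sqrt B * Real.sqrt B' * ‖x‖ := by ring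
  -- convergence in operator norm
  have htend : Tendsto T atTop (nhds M) := by
    rw [Metric.tendsto_atTop]
    intro ε hε
    set C := Real.sqrt B * Real.sqrt B' with hC
    have hCpos : 0 < C := by positivity
    have hε' : (0:ℝ) < ε / (2 * C) := by positivity
    obtain ⟨N, hN⟩ := (Metric.tendsto_atTop.mp hm) (ε / (2 * C)) hε'
    refine ⟨N, fun n hn => ?_⟩
    have hb : ∀ k, n ≤ k → ‖m k‖ ≤ ε / (2 * C) := fun k hk =>
      le_of_lt (by simpa [dist_eq_norm] using hN k (le_trans hn hk))
    have := key (ε / (2 * C)) hε'.le n hb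
    rw [dist_eq_norm]
    calc ‖T n - M‖ ≤ ε / (2 * C) * Real.sqrt B * Real.sqrt B' := this
      _ = ε / 2 := by field_simp [hC]; ring
      _ < ε := by linarith
  exact isCompactOperator_of_tendsto htend (Filter.Eventually.of_forall hTcompact)
end
end

section
/- Let (f_k)_{k∈ℕ} and (g_k)_{k∈ℕ} be Bessel sequences in a Hilbert space H and U a nonzero bounded operator on ℓ²(ℕ). If the generalized Bessel multiplier M_{U,(g_k),(f_k)} = D_{(g_k)} ∘ U ∘ C_{(f_k)} is bounded below on H, i.e. there exists C > 0 with C‖f‖ ≤ ‖M_{U,(g_k),(f_k)} f‖ for all f ∈ H, then (f_k) is a frame for H. -/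
noncomputable section

local notation "ℓ²" => lp (fun _ : ℕ => ℂ) 2

/-- Let `(f k)` and `(g k)` be Bessel sequences in `H` and `U` a nonzero
bounded operator on `ℓ²(ℕ)`. If the generalized Bessel multiplier `M = D_g ∘ U ∘ C_f` is
bounded below on `H`, then `(f k)` is a frame for `H`. -/
theorem frame_of_multiplier_bounded_below
    {H : Type*} [NormedAddCommGroup H] [InnerProductSpace ℂ H] [CompleteSpace H]
    (f g : ℕ → H) (B B' : ℝ) (hB : 0 < B) (hB' : 0 < B')
    (hf : ∀ x : H, Summable (fun k => ‖(inner ℂ (f k) x : ℂ)‖ ^ 2) ∧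
      ∑' k, ‖(inner ℂ (f k) x : ℂ)‖ ^ 2 ≤ B * ‖x‖ ^ 2)
    (hg : ∀ y : H, Summable (fun k => ‖(inner ℂ (g k) y : ℂ)‖ ^ 2) ∧
      ∑' k, ‖(inner ℂ (g k) y : ℂ)‖ ^ 2 ≤ B' * ‖y‖ ^ 2)
    (U : ℓ² →L[ℂ] ℓ²) (hU : U ≠ 0)
    (C : H →L[ℂ] ℓ²) (D : ℓ² →L[ℂ] H)
    (hC : ∀ (x : H) (k : ℕ), C x k = (inner ℂ (f k) x : ℂ))
    (hD : ∀ c : ℓ², HasSum (fun k => c k • g k) (D c))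
    (c : ℝ) (hc : 0 < c)
    (hbelow : ∀ x : H, c * ‖x‖ ≤ ‖(D.comp (U.comp C)) x‖) :
    ∃ A > (0 : ℝ), ∃ B'' > (0 : ℝ), ∀ x : H,
      A * ‖x‖ ^ 2 ≤ ∑' k, ‖(inner ℂ (f k) x : ℂ)‖ ^ 2 ∧
      ∑' k, ‖(inner ℂ (f k) x : ℂ)‖ ^ 2 ≤ B'' * ‖x‖ ^ 2 := by
  have key : ∀ x : H, ∑' k, ‖(inner ℂ (f k) x : ℂ)‖ ^ 2 = ‖C x‖ ^ 2 := by
    intro x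
    have h := lp.norm_rpow_eq_tsum (p := 2) (by norm_num) (C x)
    simp only [ENNReal.toReal_ofNat, Real.rpow_two] at h
    rw [h]
    exact tsum_congr fun k => by rw [hC x k]
  set K := ‖D‖ * ‖U‖ + 1 with hKdef
  have hK : 0 < K := by positivity
  refine ⟨(c / K) ^ 2, by positivity, B, hB, fun x => ⟨?_, (hf x).2⟩⟩
  have h1 : c * ‖x‖ ≤ K * ‖C x‖ := by
    calc c * ‖x‖ ≤ ‖(D.comp (U.comp C)) x‖ := hbelow x
    _ = ‖D (U (C x))‖ := rfl
    _ ≤ ‖D‖ * ‖U (C x)‖ := D.le_opNorm _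
    _ ≤ ‖D‖ * (‖U‖ * ‖C x‖) := by
        exact mul_le_mul_of_nonneg_left (U.le_opNorm _) (norm_nonneg D)
    _ ≤ K * ‖C x‖ := by nlinarith [norm_nonneg (C x)]
  have h2 : (c * ‖x‖) ^ 2 ≤ (K * ‖C x‖) ^ 2 :=
    pow_le_pow_left₀ (by positivity) h1 2
  rw [key x, div_pow, div_mul_eq_mul_div, div_le_iff₀ (by positivity)]
  nlinarith [h2]
end
end

section
/- Let (f_k)_{k∈ℕ} and (g_k)_{k∈ℕ} be Bessel sequences in a Hilbert space H and U a nonzero bounded operator on ℓ²(ℕ). If there exist real numbers λ₁ < 1 and λ₂ > −1 such that ‖f − M_{U,(g_k),(f_k)} f‖ ≤ λ₁‖f‖ + λ₂‖M_{U,(g_k),(f_k)} f‖ for all f ∈ H, then (f_k) is a frame for H. -/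
noncomputable section

local notation "ℓ²" => lp (fun _ : ℕ => ℂ) 2

/-- Let `(f k)` and `(g k)` be Bessel sequences in `H` and `U` a nonzero
bounded operator on `ℓ²(ℕ)`. If there exist `λ₁ < 1` and `λ₂ > -1` such that
`‖x − M x‖ ≤ λ₁ ‖x‖ + λ₂ ‖M x‖` for all `x ∈ H`, where `M = D_g ∘ U ∘ C_f`, then `(f k)` is
a frame for `H`. -/
theorem frame_of_multiplier_perturbation
    {H : Type*} [NormedAddCommGroup H] [InnerProductSpace ℂ H] [CompleteSpace H]
    (f g : ℕ → H) (B B' : ℝ) (hB : 0 < B) (hB' : 0 < B')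
    (hf : ∀ x : H, Summable (fun k => ‖(inner ℂ (f k) x : ℂ)‖ ^ 2) ∧
      ∑' k, ‖(inner ℂ (f k) x : ℂ)‖ ^ 2 ≤ B * ‖x‖ ^ 2)
    (hg : ∀ y : H, Summable (fun k => ‖(inner ℂ (g k) y : ℂ)‖ ^ 2) ∧
      ∑' k, ‖(inner ℂ (g k) y : ℂ)‖ ^ 2 ≤ B' * ‖y‖ ^ 2)
    (U : ℓ² →L[ℂ] ℓ²) (hU : U ≠ 0)
    (C : H →L[ℂ] ℓ²) (D : ℓ² →L[ℂ] H)
    (hC : ∀ (x : H) (k : ℕ), C x k = (inner ℂ (f k) x : ℂ))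
    (hD : ∀ c : ℓ², HasSum (fun k => c k • g k) (D c))
    (lam₁ lam₂ : ℝ) (hlam₁ : lam₁ < 1) (hlam₂ : -1 < lam₂)
    (hpert : ∀ x : H, ‖x - (D.comp (U.comp C)) x‖ ≤
      lam₁ * ‖x‖ + lam₂ * ‖(D.comp (U.comp C)) x‖) :
    ∃ A > (0 : ℝ), ∃ B'' > (0 : ℝ), ∀ x : H,
      A * ‖x‖ ^ 2 ≤ ∑' k, ‖(inner ℂ (f k) x : ℂ)‖ ^ 2 ∧
      ∑' k, ‖(inner ℂ (f k) x : ℂ)‖ ^ 2 ≤ B'' * ‖x‖ ^ 2 := by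
  have hUpos : (0 : ℝ) < ‖U‖ := norm_pos_iff.mpr hU
  set K : ℝ := (1 + lam₂) * ((‖D‖ + 1) * ‖U‖) with hK
  have hKpos : 0 < K := by
    apply mul_pos (by linarith) (mul_pos (by positivity) hUpos)
  refine ⟨((1 - lam₁) / K) ^ 2, pow_pos (div_pos (by linarith) hKpos) 2, B, hB, fun x => ?_⟩
  refine ⟨?_, (hf x).2⟩
  -- lower bound
  have hnorm : ‖C x‖ ^ 2 = ∑' k, ‖(inner ℂ (f k) x : ℂ)‖ ^ 2 := by
    have h2 : (0 : ℝ) < (2 : ENNReal).toReal := by norm_num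
    have := lp.norm_rpow_eq_tsum h2 (C x)
    simp only [ENNReal.toReal_ofNat] at this
    rw [← Real.rpow_natCast ‖C x‖ 2]
    push_cast
    rw [this]
    congr 1
    ext k
    rw [hC x k, ← Real.rpow_natCast]
    push_cast
    ring_nf
  rw [← hnorm]
  -- (1 - lam₁) * ‖x‖ ≤ K * ‖C x‖
  set M := D.comp (U.comp C) with hM
  have h1 : (1 - lam₁) * ‖x‖ ≤ (1 + lam₂) * ‖M x‖ := by
    have := hpert x
    have h2 := norm_sub_norm_le x (M x)
    nlinarith [norm_nonneg x, norm_nonneg (M x)]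
  have h2 : ‖M x‖ ≤ (‖D‖ + 1) * ‖U‖ * ‖C x‖ := by
    have ha : ‖M x‖ ≤ ‖D‖ * ‖U (C x)‖ := D.le_opNorm _
    have hb : ‖U (C x)‖ ≤ ‖U‖ * ‖C x‖ := U.le_opNorm _
    nlinarith [norm_nonneg (C x), norm_nonneg (U (C x)), D.opNorm_nonneg]
  have h3 : (1 - lam₁) * ‖x‖ ≤ K * ‖C x‖ := by
    calc (1 - lam₁) * ‖x‖ ≤ (1 + lam₂) * ‖M x‖ := h1
    _ ≤ K * ‖C x‖ := by
        rw [hK, mul_assoc]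
        exact mul_le_mul_of_nonneg_left h2 (by linarith)
  have h4 : ((1 - lam₁) / K) * ‖x‖ ≤ ‖C x‖ := by
    rw [div_mul_eq_mul_div, div_le_iff₀ hKpos]
    nlinarith
  have h5 : 0 ≤ ((1 - lam₁) / K) * ‖x‖ := mul_nonneg (div_nonneg (by linarith) hKpos.le) (norm_nonneg x)
  nlinarith [norm_nonneg (C x)]
end
end

section
/- Let (f_k)_{k∈ℕ}, (g_k)_{k∈ℕ}, (l_k)_{k∈ℕ} be Bessel sequences in a Hilbert space H₂ and (h_k)_{k∈ℕ} a Bessel sequence in a Hilbert space H₁, such that (l_k) and (f_k) are biorthogonal, i.e. ⟨l_j, f_k⟩ = δ_{jk} for all j, k. Then for all bounded operators U₁, U₂ on ℓ²(ℕ): M_{U₁,(g_k),(f_k)} ∘ M_{U₂,(l_k),(h_k)} = M_{U₁∘U₂,(g_k),(h_k)}. -/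
noncomputable section

local notation "ℓ²" => lp (fun _ : ℕ => ℂ) 2

/-- Let `(f k)`, `(g k)`, `(l k)` be Bessel sequences in `H₂` and `(h k)`
a Bessel sequence in `H₁`, with `(l k)` and `(f k)` biorthogonal, i.e. `⟨l j, f k⟩ = δ_{jk}`.
Then for all bounded operators `U₁, U₂` on `ℓ²(ℕ)`:
`M_{U₁,(g k),(f k)} ∘ M_{U₂,(l k),(h k)} = M_{U₁ ∘ U₂,(g k),(h k)}`. -/
theorem generalized_multiplier_comp_of_biorthogonal
    {H₁ H₂ : Type*} [NormedAddCommGroup H₁] [InnerProductSpace ℂ H₁] [CompleteSpace H₁]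
    [NormedAddCommGroup H₂] [InnerProductSpace ℂ H₂] [CompleteSpace H₂]
    (f g l : ℕ → H₂) (h : ℕ → H₁) (Bf Bg Bl Bh : ℝ)
    (hBf : 0 < Bf) (hBg : 0 < Bg) (hBl : 0 < Bl) (hBh : 0 < Bh)
    (hf : ∀ x : H₂, Summable (fun k => ‖(inner ℂ (f k) x)‖ ^ 2) ∧
      ∑' k, ‖(inner ℂ (f k) x)‖ ^ 2 ≤ Bf * ‖x‖ ^ 2)
    (hg : ∀ x : H₂, Summable (fun k => ‖(inner ℂ (g k) x)‖ ^ 2) ∧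
      ∑' k, ‖(inner ℂ (g k) x)‖ ^ 2 ≤ Bg * ‖x‖ ^ 2)
    (hl : ∀ x : H₂, Summable (fun k => ‖(inner ℂ (l k) x)‖ ^ 2) ∧
      ∑' k, ‖(inner ℂ (l k) x)‖ ^ 2 ≤ Bl * ‖x‖ ^ 2)
    (hh : ∀ x : H₁, Summable (fun k => ‖(inner ℂ (h k) x)‖ ^ 2) ∧
      ∑' k, ‖(inner ℂ (h k) x)‖ ^ 2 ≤ Bh * ‖x‖ ^ 2)
    (hbi : ∀ j k : ℕ, (inner ℂ (f k) (l j)) = if j = k then 1 else 0)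
    (Cf : H₂ →L[ℂ] ℓ²) (Dg : ℓ² →L[ℂ] H₂) (Ch : H₁ →L[ℂ] ℓ²) (Dl : ℓ² →L[ℂ] H₂)
    (hCf : ∀ (x : H₂) (k : ℕ), Cf x k = (inner ℂ (f k) x))
    (hDg : ∀ c : ℓ², HasSum (fun k => c k • g k) (Dg c))
    (hCh : ∀ (x : H₁) (k : ℕ), Ch x k = (inner ℂ (h k) x))
    (hDl : ∀ c : ℓ², HasSum (fun k => c k • l k) (Dl c))
    (U₁ U₂ : ℓ² →L[ℂ] ℓ²) :
    (Dg.comp (U₁.comp Cf)).comp (Dl.comp (U₂.comp Ch)) =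
      Dg.comp ((U₁.comp U₂).comp Ch) := by
  have key : ∀ c : ℓ², Cf (Dl c) = c := by
    intro c
    ext k
    rw [hCf]
    have hs := (hDl c).mapL (innerSL ℂ (f k))
    simp only [innerSL_apply_apply, inner_smul_right, hbi, mul_ite, mul_one, mul_zero] at hs
    have heq : (fun j : ℕ => if j = k then (c j : ℂ) else 0)
        = fun j : ℕ => if j = k then (c k : ℂ) else 0 := by
      funext j
      by_cases hj : j = k <;> simp [hj]
    rw [heq] at hs
    exact hs.unique (hasSum_ite_eq k (c k))
  ext x
  simp [key]
end
end

section
/- Let (f_k)_{k∈ℕ} and (g_k)_{k∈ℕ} be Riesz bases for a Hilbert space H and U a nonzero bounded operator on ℓ²(ℕ). Then U is invertible in B(ℓ²(ℕ)) if and only if the generalized Bessel multiplier M_{U,(g_k),(f_k)} = D_{(g_k)} ∘ U ∘ C_{(f_k)} is invertible in B(H). -/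
noncomputable section

local notation "ℓ²" => lp (fun _ : ℕ => ℂ) 2

open ContinuousLinearMap in
/-- Auxiliary: a synthesis operator of a Riesz sequence with dense span has a
two-sided continuous linear inverse. -/
lemma riesz_synthesis_has_inverse
    {H : Type*} [NormedAddCommGroup H] [InnerProductSpace ℂ H] [CompleteSpace H]
    (f : ℕ → H) (A : ℝ) (hA : 0 < A) (D : ℓ² →L[ℂ] H)
    (hD : ∀ c : ℓ², HasSum (fun k => c k • f k) (D c))
    (hspan : (Submodule.span ℂ (Set.range f)).topologicalClosure = ⊤)
    (hR : ∀ c : ℓ², A * ‖c‖ ^ 2 ≤ ‖D c‖ ^ 2) :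
    ∃ D' : H →L[ℂ] ℓ², (∀ x, D (D' x) = x) ∧ (∀ c, D' (D c) = c) := by
  have hlow : ∀ c : ℓ², Real.sqrt A * ‖c‖ ≤ ‖D c‖ := by
    intro c
    have h := hR c
    have h1 : Real.sqrt (A * ‖c‖ ^ 2) ≤ Real.sqrt (‖D c‖ ^ 2) := Real.sqrt_le_sqrt h
    rwa [Real.sqrt_mul hA.le, Real.sqrt_sq (norm_nonneg _), Real.sqrt_sq (norm_nonneg _)] at h1
  have hker : D.ker = ⊥ := by
    rw [LinearMap.ker_eq_bot']
    intro c hc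
    have := hlow c
    rw [show D c = 0 from hc, norm_zero] at this
    have hc0 : ‖c‖ ≤ 0 := by
      nlinarith [Real.sqrt_pos.2 hA, norm_nonneg c]
    exact norm_le_zero_iff.1 hc0
  have hanti : AntilipschitzWith (Real.sqrt A)⁻¹.toNNReal D := by
    apply D.antilipschitz_of_bound
    intro c
    have hs : (0:ℝ) < Real.sqrt A := Real.sqrt_pos.2 hA
    rw [Real.coe_toNNReal _ (by positivity), le_inv_mul_iff₀ hs]
    exact hlow c
  have hclosed : IsClosed (D.range : Set H) := by
    have := hanti.isClosed_range D.uniformContinuous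
    convert this using 1
    exact LinearMap.coe_range _
  have hrange : D.range = ⊤ := by
    have hfm : ∀ k, f k ∈ D.range := by
      intro k
      refine ⟨lp.single 2 k (1:ℂ), ?_⟩
      have h1 := hD (lp.single 2 k (1:ℂ))
      have h2 : HasSum (fun j => (lp.single 2 k (1:ℂ) : ℓ²) j • f j) (f k) := by
        have : (fun j => (lp.single 2 k (1:ℂ) : ℓ²) j • f j)
            = fun j => if j = k then f k else 0 := by
          funext j
          by_cases hj : j = k
          · subst hj
            rw [lp.single_apply_self (E := fun _ : ℕ => ℂ)]
            simp
          · rw [lp.single_apply_ne (E := fun _ : ℕ => ℂ) 2 k (1:ℂ) hj]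
            simp [hj]
        rw [this]
        exact hasSum_ite_eq k (f k)
      exact h1.unique h2
    have hle : Submodule.span ℂ (Set.range f) ≤ D.range := by
      rw [Submodule.span_le]
      rintro _ ⟨k, rfl⟩
      exact hfm k
    have hle2 : (Submodule.span ℂ (Set.range f)).topologicalClosure ≤ D.range :=
      Submodule.topologicalClosure_minimal _ hle hclosed
    rw [hspan, top_le_iff] at hle2
    exact hle2
  let e := ContinuousLinearEquiv.ofBijective D hker hrange
  refine ⟨(e.symm : H →L[ℂ] ℓ²), ?_, ?_⟩
  · intro x
    exact ContinuousLinearEquiv.ofBijective_apply_symm_apply D hker hrange x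
  · intro c
    exact ContinuousLinearEquiv.ofBijective_symm_apply_apply D hker hrange c

/-- Let `(f k)` and `(g k)` be Riesz bases for `H` and `U` a nonzero
bounded operator on `ℓ²(ℕ)`. Then `U` is invertible in `B(ℓ²(ℕ))` if and only if the
generalized Bessel multiplier `M = D_g ∘ U ∘ C_f` is invertible in `B(H)`. -/
theorem generalized_riesz_multiplier_invertible_iff
    {H : Type*} [NormedAddCommGroup H] [InnerProductSpace ℂ H] [CompleteSpace H]
    (f g : ℕ → H) (A B A' B' : ℝ) (hA : 0 < A) (hB : 0 < B) (hA' : 0 < A') (hB' : 0 < B')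
    (Df Dg : ℓ² →L[ℂ] H) (Cf : H →L[ℂ] ℓ²)
    (hDf : ∀ c : ℓ², HasSum (fun k => c k • f k) (Df c))
    (hDg : ∀ c : ℓ², HasSum (fun k => c k • g k) (Dg c))
    (hCf : ∀ (x : H) (k : ℕ), Cf x k = (inner ℂ (f k) x : ℂ))
    (hfspan : (Submodule.span ℂ (Set.range f)).topologicalClosure = ⊤)
    (hgspan : (Submodule.span ℂ (Set.range g)).topologicalClosure = ⊤)
    (hfRiesz : ∀ c : ℓ², A * ‖c‖ ^ 2 ≤ ‖Df c‖ ^ 2 ∧ ‖Df c‖ ^ 2 ≤ B * ‖c‖ ^ 2)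
    (hgRiesz : ∀ c : ℓ², A' * ‖c‖ ^ 2 ≤ ‖Dg c‖ ^ 2 ∧ ‖Dg c‖ ^ 2 ≤ B' * ‖c‖ ^ 2)
    (U : ℓ² →L[ℂ] ℓ²) (hU : U ≠ 0) :
    IsUnit U ↔ IsUnit (Dg.comp (U.comp Cf)) := by
  obtain ⟨Df', hDfDf', hDf'Df⟩ :=
    riesz_synthesis_has_inverse f A hA Df hDf hfspan (fun c => (hfRiesz c).1)
  obtain ⟨Dg', hDgDg', hDg'Dg⟩ :=
    riesz_synthesis_has_inverse g A' hA' Dg hDg hgspan (fun c => (hgRiesz c).1)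
  -- Cf is the adjoint of Df
  have hCfadj : Cf = ContinuousLinearMap.adjoint Df := by
    rw [ContinuousLinearMap.eq_adjoint_iff]
    intro x c
    have h1 : HasSum (fun k => (inner ℂ (Cf x k) (c k) : ℂ)) (inner ℂ (Cf x) c : ℂ) :=
      lp.hasSum_inner (Cf x) c
    have h2 : HasSum (fun k => (inner ℂ x (c k • f k) : ℂ)) (inner ℂ x (Df c) : ℂ) :=
      ((innerSL ℂ x).hasSum (hDf c))
    refine h1.unique ?_
    convert h2 using 2 with k
    rw [hCf]
    simp only [inner_smul_right]
    rw [RCLike.inner_apply, ← inner_conj_symm x (f k)]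
  -- Cf has a two-sided inverse, namely the adjoint of Df'
  set Cf' : ℓ² →L[ℂ] H := ContinuousLinearMap.adjoint Df' with hCf'def
  have hDfDf'c : Df.comp Df' = ContinuousLinearMap.id ℂ H := by
    ext x; exact hDfDf' x
  have hDf'Dfc : Df'.comp Df = ContinuousLinearMap.id ℂ ℓ² := by
    ext c k; exact congrFun (congrArg _ (hDf'Df c)) k
  have hCfCf' : ∀ c : ℓ², Cf (Cf' c) = c := by
    intro c
    have : Cf.comp Cf' = ContinuousLinearMap.id ℂ ℓ² := by
      rw [hCfadj, hCf'def, ← ContinuousLinearMap.adjoint_comp, hDf'Dfc]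
      exact ContinuousLinearMap.adjoint_id
    calc Cf (Cf' c) = (Cf.comp Cf') c := rfl
      _ = c := by rw [this]; rfl
  have hCf'Cf : ∀ x : H, Cf' (Cf x) = x := by
    intro x
    have : Cf'.comp Cf = ContinuousLinearMap.id ℂ H := by
      rw [hCfadj, hCf'def, ← ContinuousLinearMap.adjoint_comp, hDfDf'c]
      exact ContinuousLinearMap.adjoint_id
    calc Cf' (Cf x) = (Cf'.comp Cf) x := rfl
      _ = x := by rw [this]; rfl
  rw [isUnit_iff_exists, isUnit_iff_exists]
  constructor
  · rintro ⟨V, hUV, hVU⟩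
    have hUV' : ∀ c, U (V c) = c := fun c => by
      have := congrFun (congrArg (fun (T : ℓ² →L[ℂ] ℓ²) => (T : ℓ² → ℓ²)) hUV) c
      simpa using this
    have hVU' : ∀ c, V (U c) = c := fun c => by
      have := congrFun (congrArg (fun (T : ℓ² →L[ℂ] ℓ²) => (T : ℓ² → ℓ²)) hVU) c
      simpa using this
    refine ⟨Cf'.comp (V.comp Dg'), ?_, ?_⟩
    · ext x
      simp [ContinuousLinearMap.mul_apply, hCfCf', hUV', hDgDg']
    · ext x
      simp [ContinuousLinearMap.mul_apply, hDg'Dg, hVU', hCf'Cf]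
  · rintro ⟨N, hMN, hNM⟩
    have hMN' : ∀ x, Dg (U (Cf (N x))) = x := fun x => by
      have := congrFun (congrArg (fun (T : H →L[ℂ] H) => (T : H → H)) hMN) x
      simpa using this
    have hNM' : ∀ x, N (Dg (U (Cf x))) = x := fun x => by
      have := congrFun (congrArg (fun (T : H →L[ℂ] H) => (T : H → H)) hNM) x
      simpa using this
    refine ⟨Cf.comp (N.comp Dg), ?_, ?_⟩
    · refine ContinuousLinearMap.ext fun c => ?_
      have key : U (Cf (N (Dg c))) = c := by
        have h1 : Dg (U (Cf (N (Dg c)))) = Dg c := hMN' (Dg c)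
        have := congrArg Dg' h1
        rwa [hDg'Dg, hDg'Dg] at this
      simpa [ContinuousLinearMap.mul_apply] using key
    · refine ContinuousLinearMap.ext fun c => ?_
      have key : Cf (N (Dg (U c))) = c := by
        have h1 : N (Dg (U (Cf (Cf' c)))) = Cf' c := hNM' (Cf' c)
        rw [hCfCf'] at h1
        rw [h1, hCfCf']
      simpa [ContinuousLinearMap.mul_apply] using key
end
end

section
/- Let (f_k)_{k∈ℕ} and (g_k)_{k∈ℕ} be Riesz bases for a Hilbert space H with biorthogonal (dual) Riesz bases (f̃_k) and (g̃_k), respectively, and let U be an invertible bounded operator on ℓ²(ℕ). Then the generalized Bessel multiplier M_{U,(g_k),(f_k)} is invertible and its inverse is (M_{U,(g_k),(f_k)})⁻¹ = M_{U⁻¹,(f̃_k),(g̃_k)} = D_{(f̃_k)} ∘ U⁻¹ ∘ C_{(g̃_k)}. -/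
noncomputable section

local notation "ℓ²" => lp (fun _ : ℕ => ℂ) 2

/-- Let `(f k)` and `(g k)` be Riesz bases for `H` with biorthogonal (dual)
Riesz bases `(tf k)` and `(tg k)` respectively, and let `U` be an invertible bounded operator
on `ℓ²(ℕ)` (with inverse `V`). Then the generalized Bessel multiplier
`M = D_g ∘ U ∘ C_f` is invertible with inverse `M⁻¹ = D_{tf} ∘ U⁻¹ ∘ C_{tg}`. -/
theorem generalized_riesz_multiplier_inverse
    {H : Type*} [NormedAddCommGroup H] [InnerProductSpace ℂ H] [CompleteSpace H]
    (f g tf tg : ℕ → H) (A B A' B' : ℝ)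
    (hA : 0 < A) (hB : 0 < B) (hA' : 0 < A') (hB' : 0 < B')
    (Df Dg Dtf : ℓ² →L[ℂ] H) (Cf Ctg : H →L[ℂ] ℓ²)
    (hDf : ∀ c : ℓ², HasSum (fun k => c k • f k) (Df c))
    (hDg : ∀ c : ℓ², HasSum (fun k => c k • g k) (Dg c))
    (hDtf : ∀ c : ℓ², HasSum (fun k => c k • tf k) (Dtf c))
    (hCf : ∀ (x : H) (k : ℕ), Cf x k = (inner ℂ (f k) x : ℂ))
    (hCtg : ∀ (x : H) (k : ℕ), Ctg x k = (inner ℂ (tg k) x : ℂ))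
    (hfspan : (Submodule.span ℂ (Set.range f)).topologicalClosure = ⊤)
    (hgspan : (Submodule.span ℂ (Set.range g)).topologicalClosure = ⊤)
    (hfRiesz : ∀ c : ℓ², A * ‖c‖ ^ 2 ≤ ‖Df c‖ ^ 2 ∧ ‖Df c‖ ^ 2 ≤ B * ‖c‖ ^ 2)
    (hgRiesz : ∀ c : ℓ², A' * ‖c‖ ^ 2 ≤ ‖Dg c‖ ^ 2 ∧ ‖Dg c‖ ^ 2 ≤ B' * ‖c‖ ^ 2)
    (hbif : ∀ j k : ℕ, (inner ℂ (f k) (tf j) : ℂ) = if j = k then 1 else 0)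
    (hbig : ∀ j k : ℕ, (inner ℂ (g k) (tg j) : ℂ) = if j = k then 1 else 0)
    (U V : ℓ² →L[ℂ] ℓ²)
    (hUV : U.comp V = ContinuousLinearMap.id ℂ ℓ²)
    (hVU : V.comp U = ContinuousLinearMap.id ℂ ℓ²) :
    (Dg.comp (U.comp Cf)).comp (Dtf.comp (V.comp Ctg)) = ContinuousLinearMap.id ℂ H ∧
    (Dtf.comp (V.comp Ctg)).comp (Dg.comp (U.comp Cf)) = ContinuousLinearMap.id ℂ H := by
  -- pointwise versions of U∘V = id, V∘U = id
  have hUV' : ∀ c : ℓ², U (V c) = c := fun c => congrArg (· c) hUV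
  have hVU' : ∀ c : ℓ², V (U c) = c := fun c => congrArg (· c) hVU
  -- Step 1: Cf ∘ Dtf = id on ℓ² (biorthogonality of f and tf)
  have hCfDtf : ∀ c : ℓ², Cf (Dtf c) = c := by
    intro c
    refine lp.ext (funext fun k => ?_)
    rw [hCf]
    have h1 : HasSum (fun j => (inner ℂ (f k) (c j • tf j) : ℂ)) (inner ℂ (f k) (Dtf c)) :=
      (hDtf c).mapL (innerSL ℂ (f k))
    have h2 : (fun j => (inner ℂ (f k) (c j • tf j) : ℂ)) =
        fun j => if j = k then c k else 0 := by
      funext j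
      rw [inner_smul_right, hbif]
      split_ifs with h
      · subst h; ring
      · ring
    rw [h2] at h1
    exact h1.unique (hasSum_ite_eq k (c k))
  -- Step 2: Ctg ∘ Dg = id on ℓ² (biorthogonality of g and tg)
  have hCtgDg : ∀ c : ℓ², Ctg (Dg c) = c := by
    intro c
    refine lp.ext (funext fun k => ?_)
    rw [hCtg]
    have h1 : HasSum (fun j => (inner ℂ (tg k) (c j • g j) : ℂ)) (inner ℂ (tg k) (Dg c)) :=
      (hDg c).mapL (innerSL ℂ (tg k))
    have h2 : (fun j => (inner ℂ (tg k) (c j • g j) : ℂ)) =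
        fun j => if j = k then c k else 0 := by
      funext j
      rw [inner_smul_right]
      have : (inner ℂ (tg k) (g j) : ℂ) = if j = k then 1 else 0 := by
        rw [← inner_conj_symm, hbig]
        by_cases h : j = k
        · subst h; simp
        · rw [if_neg (fun hh => h hh.symm), if_neg h]; simp
      rw [this]
      split_ifs with h
      · subst h; ring
      · ring
    rw [h2] at h1
    exact h1.unique (hasSum_ite_eq k (c k))
  -- Step 3: Cf is injective (since span of f is dense)
  have hCfinj : ∀ x : H, Cf x = 0 → x = 0 := by
    intro x hx
    have hzero : ∀ k, (inner ℂ (f k) x : ℂ) = 0 := by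
      intro k
      rw [← hCf, hx]
      rfl
    have hxorth : x ∈ (Submodule.span ℂ (Set.range f))ᗮ := by
      rw [Submodule.mem_orthogonal]
      intro u hu
      induction hu using Submodule.span_induction with
      | mem y hy => obtain ⟨k, rfl⟩ := hy; exact hzero k
      | zero => simp
      | add a b _ _ ha hb => rw [inner_add_left, ha, hb, add_zero]
      | smul r a _ ha => rw [inner_smul_left, ha, mul_zero]
    rw [Submodule.topologicalClosure_eq_top_iff.mp hfspan] at hxorth
    simpa using hxorth
  -- Step 4: Dtf ∘ Cf = id on H
  have hDtfCf : ∀ x : H, Dtf (Cf x) = x := by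
    intro x
    have : Cf (Dtf (Cf x) - x) = 0 := by
      rw [map_sub, hCfDtf, sub_self]
    exact sub_eq_zero.mp (hCfinj _ this)
  -- Step 5: Dg ∘ Ctg = id on H (agree on the dense span of range g)
  have hsingle : ∀ j : ℕ, Dg (lp.single 2 j (1:ℂ)) = g j := by
    intro j
    have h1 : HasSum (fun k => (lp.single 2 j (1:ℂ) : ℓ²) k • g k) (Dg (lp.single 2 j 1)) :=
      hDg _
    have h2 : (fun k => (lp.single 2 j (1:ℂ) : ℓ²) k • g k) =
        fun k => if k = j then g j else 0 := by
      funext k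
      rw [lp.single_apply]
      split_ifs with h
      · subst h; simp
      · simp [Pi.single_apply, h]
    rw [h2] at h1
    exact h1.unique (hasSum_ite_eq j (g j))
  have hCtgg : ∀ j : ℕ, Ctg (g j) = lp.single 2 j (1:ℂ) := by
    intro j
    refine lp.ext (funext fun k => ?_)
    rw [hCtg, lp.single_apply]
    have : (inner ℂ (tg k) (g j) : ℂ) = if k = j then 1 else 0 := by
      rw [← inner_conj_symm, hbig]
      split_ifs <;> simp
    rw [this]
    split_ifs with h <;> simp [h]
  have hDgCtg : Dg.comp Ctg = ContinuousLinearMap.id ℂ H := by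
    refine ContinuousLinearMap.ext_on
      (Submodule.dense_iff_topologicalClosure_eq_top.mpr hgspan) ?_
    rintro x ⟨j, rfl⟩
    simp only [ContinuousLinearMap.comp_apply, ContinuousLinearMap.id_apply]
    rw [hCtgg, hsingle]
  have hDgCtg' : ∀ x : H, Dg (Ctg x) = x := fun x => congrArg (· x) hDgCtg
  constructor
  · ext x
    simp only [ContinuousLinearMap.comp_apply, ContinuousLinearMap.id_apply]
    rw [hCfDtf, hUV', hDgCtg']
  · ext x
    simp only [ContinuousLinearMap.comp_apply, ContinuousLinearMap.id_apply]
    rw [hCtgDg, hVU', hDtfCf]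
end
end

section
/- Let (f_k)_{k∈ℕ} and (g_k)_{k∈ℕ} be Bessel sequences in a Hilbert space H, with (f_k) having Bessel bound B, and let U be a nonzero bounded operator on ℓ²(ℕ). If the generalized Bessel multiplier M_{U,(g_k),(f_k)} is invertible in B(H), then (g_k) satisfies the lower frame condition for H; more precisely, ‖g‖² ≤ B‖U‖²‖M_{U,(g_k),(f_k)}⁻¹‖² · ∑_k |⟨g_k, g⟩|² for every g ∈ H. -/
noncomputable section

local notation "ℓ²" => lp (fun _ : ℕ => ℂ) 2

/-- Let `(f k)` and `(g k)` be Bessel sequences in `H`, with `(f k)` having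
Bessel bound `B`, and `U` a nonzero bounded operator on `ℓ²(ℕ)`. If the generalized Bessel
multiplier `M = D_g ∘ U ∘ C_f` is invertible (with inverse `N`), then `(g k)` satisfies the
lower frame condition: `‖y‖² ≤ B ‖U‖² ‖N‖² ∑ₖ |⟨g k, y⟩|²` for every `y ∈ H`. -/
theorem lower_frame_condition_of_invertible_multiplier
    {H : Type*} [NormedAddCommGroup H] [InnerProductSpace ℂ H] [CompleteSpace H]
    (f g : ℕ → H) (B B' : ℝ) (hB : 0 < B) (hB' : 0 < B')
    (hf : ∀ x : H, Summable (fun k => ‖(inner ℂ (f k) x : ℂ)‖ ^ 2) ∧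
      ∑' k, ‖(inner ℂ (f k) x : ℂ)‖ ^ 2 ≤ B * ‖x‖ ^ 2)
    (hg : ∀ y : H, Summable (fun k => ‖(inner ℂ (g k) y : ℂ)‖ ^ 2) ∧
      ∑' k, ‖(inner ℂ (g k) y : ℂ)‖ ^ 2 ≤ B' * ‖y‖ ^ 2)
    (U : ℓ² →L[ℂ] ℓ²) (hU : U ≠ 0)
    (C : H →L[ℂ] ℓ²) (D : ℓ² →L[ℂ] H)
    (hC : ∀ (x : H) (k : ℕ), C x k = (inner ℂ (f k) x : ℂ))
    (hD : ∀ c : ℓ², HasSum (fun k => c k • g k) (D c))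
    (N : H →L[ℂ] H)
    (hMN : (D.comp (U.comp C)).comp N = ContinuousLinearMap.id ℂ H)
    (hNM : N.comp (D.comp (U.comp C)) = ContinuousLinearMap.id ℂ H) :
    ∀ y : H, ‖y‖ ^ 2 ≤ B * ‖U‖ ^ 2 * ‖N‖ ^ 2 * ∑' k, ‖(inner ℂ (g k) y : ℂ)‖ ^ 2 := by
  intro y
  set S := ∑' k, ‖(inner ℂ (g k) y : ℂ)‖ ^ 2 with hSdef
  have hSnn : 0 ≤ S := tsum_nonneg fun k => by positivity
  by_cases hy : y = 0
  · have h0 : (0:ℝ) ≤ B * ‖U‖ ^ 2 * ‖N‖ ^ 2 * S :=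
      mul_nonneg (by positivity) hSnn
    calc ‖y‖ ^ 2 = 0 := by rw [hy, norm_zero]; ring
      _ ≤ _ := h0
  have hy2 : 0 < ‖y‖ ^ 2 := pow_pos (norm_pos_iff.mpr hy) 2
  have htwo : ((2 : ENNReal)).toReal = 2 := by simp
  -- c := U (C (N y)) reconstructs y
  set c : ℓ² := U (C (N y)) with hc
  have hDc : D c = y := by
    have := congrArg (fun T : H →L[ℂ] H => T y) hMN
    simpa using this
  -- norm of lp elements squared
  have norm_sq_lp : ∀ v : ℓ², ‖v‖ ^ 2 = ∑' k, ‖v k‖ ^ 2 := by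
    intro v
    have := lp.norm_rpow_eq_tsum (p := 2) (by norm_num) v
    rw [htwo] at this
    simpa [Real.rpow_two] using this
  -- the sequence b k = ⟪y, g k⟫ lies in ℓ²
  have hbsum : Summable (fun k => ‖(inner ℂ y (g k) : ℂ)‖ ^ 2) := by
    simpa [norm_inner_symm] using (hg y).1
  have hbmem : Memℓp (fun k => (inner ℂ y (g k) : ℂ)) 2 := by
    apply memℓp_gen
    rw [htwo]
    simpa [Real.rpow_two] using hbsum
  set b : ℓ² := ⟨_, hbmem⟩ with hbdef
  have hbS : ‖b‖ ^ 2 = S := by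
    rw [norm_sq_lp b, hSdef]
    refine tsum_congr fun k => ?_
    show ‖(inner ℂ y (g k) : ℂ)‖ ^ 2 = ‖(inner ℂ (g k) y : ℂ)‖ ^ 2
    rw [norm_inner_symm]
  -- the conjugate of c lies in ℓ²
  have hcsum : Summable (fun k => ‖c k‖ ^ 2) := by
    have := (lp.memℓp c).summable (p := 2) (by norm_num)
    rw [htwo] at this
    simpa [Real.rpow_two] using this
  have hamem : Memℓp (fun k => (starRingEnd ℂ) (c k)) 2 := by
    apply memℓp_gen
    rw [htwo]
    simpa [Real.rpow_two] using hcsum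
  set a : ℓ² := ⟨_, hamem⟩ with hadef
  have hac : ‖a‖ = ‖c‖ := by
    have h1 := norm_sq_lp a
    have h2 := norm_sq_lp c
    have hsq : ‖a‖ ^ 2 = ‖c‖ ^ 2 := by
      rw [h1, h2]
      refine tsum_congr fun k => ?_
      show ‖(starRingEnd ℂ) (c k)‖ ^ 2 = ‖c k‖ ^ 2
      rw [RCLike.norm_conj]
    exact (sq_eq_sq₀ (norm_nonneg a) (norm_nonneg c)).mp hsq
  -- ⟪y, y⟫ = ⟪a, b⟫ in ℓ²
  have hsum1 : HasSum (fun k => (inner ℂ y (c k • g k) : ℂ)) (inner ℂ y (D c)) :=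
    (innerSL ℂ y).hasSum (hD c)
  have hsum1' : HasSum (fun k => c k * (inner ℂ y (g k) : ℂ)) (inner ℂ y y) := by
    have h' : HasSum (fun k => c k * (inner ℂ y (g k) : ℂ)) (inner ℂ y (D c)) := by
      simpa [inner_smul_right] using hsum1
    rwa [hDc] at h'
  have hinner_ab : (inner ℂ a b : ℂ) = inner ℂ y y := by
    rw [lp.inner_eq_tsum]
    rw [← hsum1'.tsum_eq]
    refine tsum_congr fun k => ?_
    show (inner ℂ ((starRingEnd ℂ) (c k)) (inner ℂ y (g k) : ℂ) : ℂ) = c k * inner ℂ y (g k)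
    rw [RCLike.inner_apply]
    simp [mul_comm]
  -- Cauchy–Schwarz
  have hCS : ‖y‖ ^ 2 ≤ ‖c‖ * ‖b‖ := by
    have := norm_inner_le_norm (𝕜 := ℂ) a b
    rw [hinner_ab, hac] at this
    calc ‖y‖ ^ 2 = ‖(inner ℂ y y : ℂ)‖ := by
          rw [inner_self_eq_norm_sq_to_K]
          simp
      _ ≤ ‖c‖ * ‖b‖ := this
  -- bound on ‖c‖²
  have hCx : ∀ x : H, ‖C x‖ ^ 2 ≤ B * ‖x‖ ^ 2 := by
    intro x
    rw [norm_sq_lp]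
    calc ∑' k, ‖C x k‖ ^ 2 = ∑' k, ‖(inner ℂ (f k) x : ℂ)‖ ^ 2 :=
          tsum_congr fun k => by rw [hC]
      _ ≤ B * ‖x‖ ^ 2 := (hf x).2
  have hc2 : ‖c‖ ^ 2 ≤ B * ‖U‖ ^ 2 * ‖N‖ ^ 2 * ‖y‖ ^ 2 := by
    have h1 : ‖c‖ ≤ ‖U‖ * ‖C (N y)‖ := U.le_opNorm _
    have h2 : ‖C (N y)‖ ^ 2 ≤ B * ‖N y‖ ^ 2 := hCx _
    have h3 : ‖N y‖ ≤ ‖N‖ * ‖y‖ := N.le_opNorm _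
    have h3' : ‖N y‖ ^ 2 ≤ ‖N‖ ^ 2 * ‖y‖ ^ 2 := by
      calc ‖N y‖ ^ 2 ≤ (‖N‖ * ‖y‖) ^ 2 := pow_le_pow_left₀ (norm_nonneg _) h3 2
        _ = ‖N‖ ^ 2 * ‖y‖ ^ 2 := mul_pow _ _ 2
    calc ‖c‖ ^ 2 ≤ (‖U‖ * ‖C (N y)‖) ^ 2 := pow_le_pow_left₀ (norm_nonneg _) h1 2
      _ = ‖U‖ ^ 2 * ‖C (N y)‖ ^ 2 := mul_pow _ _ 2
      _ ≤ ‖U‖ ^ 2 * (B * ‖N y‖ ^ 2) := by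
          exact mul_le_mul_of_nonneg_left h2 (by positivity)
      _ ≤ ‖U‖ ^ 2 * (B * (‖N‖ ^ 2 * ‖y‖ ^ 2)) := by
          exact mul_le_mul_of_nonneg_left
            (mul_le_mul_of_nonneg_left h3' hB.le) (by positivity)
      _ = B * ‖U‖ ^ 2 * ‖N‖ ^ 2 * ‖y‖ ^ 2 := by ring
  -- combine
  have key : (‖y‖ ^ 2) * (‖y‖ ^ 2) ≤ (B * ‖U‖ ^ 2 * ‖N‖ ^ 2 * S) * (‖y‖ ^ 2) := by
    calc (‖y‖ ^ 2) * (‖y‖ ^ 2) = (‖y‖ ^ 2) ^ 2 := (sq _).symm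
      _ ≤ (‖c‖ * ‖b‖) ^ 2 := pow_le_pow_left₀ (by positivity) hCS 2
      _ = ‖c‖ ^ 2 * ‖b‖ ^ 2 := mul_pow _ _ 2
      _ ≤ (B * ‖U‖ ^ 2 * ‖N‖ ^ 2 * ‖y‖ ^ 2) * ‖b‖ ^ 2 :=
          mul_le_mul_of_nonneg_right hc2 (by positivity)
      _ = (B * ‖U‖ ^ 2 * ‖N‖ ^ 2 * S) * (‖y‖ ^ 2) := by rw [hbS]; ring
  exact le_of_mul_le_mul_right key hy2
end
end

section
/- Let (g_k)_{k∈ℕ} be a Riesz basis and (f_k)_{k∈ℕ} a Bessel sequence for a Hilbert space H, and let U be a bijective bounded operator on ℓ²(ℕ). Then the generalized Bessel multiplier M_{U,(g_k),(f_k)} = D_{(g_k)} ∘ U ∘ C_{(f_k)} is invertible in B(H) if and only if (f_k) is a Riesz basis for H. -/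
noncomputable section

local notation "ℓ²" => lp (fun _ : ℕ => ℂ) 2

open ContinuousLinearMap in
lemma aux_single {H : Type*} [NormedAddCommGroup H] [NormedSpace ℂ H]
    (h : ℕ → H) (D : ℓ² →L[ℂ] H)
    (hD : ∀ c : ℓ², HasSum (fun k => c k • h k) (D c)) (k : ℕ) :
    D (lp.single 2 k 1) = h k := by
  set c : ℓ² := lp.single 2 k 1 with hc
  refine (hD c).unique ?_
  have he : (fun j => c j • h j) = fun j => if j = k then h k else 0 := by
    funext j
    by_cases hj : j = k
    · subst hj; simp [hc, lp.single_apply_self]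
    · simp [hc, lp.single_apply_ne 2 k _ hj, hj]
  rw [he]
  exact hasSum_ite_eq k (h k)

lemma aux_bij {H : Type*} [NormedAddCommGroup H] [NormedSpace ℂ H]
    (T : ℓ² →L[ℂ] H) (A : ℝ) (hA : 0 < A)
    (hlow : ∀ c : ℓ², A * ‖c‖ ^ 2 ≤ ‖T c‖ ^ 2)
    (hdense : Dense (Set.range ⇑T)) : Function.Bijective ⇑T := by
  have hsA : 0 < Real.sqrt A := Real.sqrt_pos.mpr hA
  have hb : ∀ c : ℓ², ‖c‖ ≤ (Real.sqrt A)⁻¹ * ‖T c‖ := by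
    intro c
    have h2 : Real.sqrt (A * ‖c‖ ^ 2) ≤ Real.sqrt (‖T c‖ ^ 2) := Real.sqrt_le_sqrt (hlow c)
    rw [Real.sqrt_mul hA.le, Real.sqrt_sq (norm_nonneg c), Real.sqrt_sq (norm_nonneg _)] at h2
    rw [inv_mul_eq_div, le_div_iff₀ hsA]
    linarith [h2]
  have hK : AntilipschitzWith ⟨(Real.sqrt A)⁻¹, by positivity⟩ ⇑T :=
    T.antilipschitz_of_bound (fun x => hb x)
  refine ⟨hK.injective, ?_⟩
  have hcl : IsClosed (Set.range ⇑T) := hK.isClosed_range T.uniformContinuous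
  have : Set.range ⇑T = Set.univ := by
    rw [← hcl.closure_eq]; exact hdense.closure_eq
  exact Set.range_eq_univ.mp this

lemma aux_dense {H : Type*} [NormedAddCommGroup H] [NormedSpace ℂ H]
    (h : ℕ → H) (D : ℓ² →L[ℂ] H)
    (hD : ∀ c : ℓ², HasSum (fun k => c k • h k) (D c))
    (hspan : (Submodule.span ℂ (Set.range h)).topologicalClosure = ⊤) :
    Dense (Set.range ⇑D) := by
  rw [dense_iff_closure_eq]
  have h1 : (Submodule.span ℂ (Set.range h) : Set H) ⊆ Set.range ⇑D := by
    have hle : Submodule.span ℂ (Set.range h) ≤ LinearMap.range (D : ℓ² →ₗ[ℂ] H) := by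
      rw [Submodule.span_le]
      rintro _ ⟨k, rfl⟩
      exact ⟨lp.single 2 k 1, aux_single h D hD k⟩
    intro x hx
    exact hle hx
  have h2 := closure_mono h1
  have h3 : closure (Submodule.span ℂ (Set.range h) : Set H) = Set.univ := by
    rw [← Submodule.topologicalClosure_coe, hspan]; rfl
  rw [h3] at h2
  exact Set.univ_subset_iff.mp h2

set_option maxHeartbeats 1600000 in
/-- Let `(g k)` be a Riesz basis and `(f k)` a Bessel sequence for `H`,
and let `U` be a bijective bounded operator on `ℓ²(ℕ)`. Then the generalized Bessel
multiplier `M = D_g ∘ U ∘ C_f` is invertible in `B(H)` if and only if `(f k)` is a Riesz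
basis for `H`. -/
theorem multiplier_invertible_iff_riesz_basis
    {H : Type*} [NormedAddCommGroup H] [InnerProductSpace ℂ H] [CompleteSpace H]
    (f g : ℕ → H) (B A' B' : ℝ) (hB : 0 < B) (hA' : 0 < A') (hB' : 0 < B')
    (hf : ∀ x : H, Summable (fun k => ‖(inner ℂ (f k) x : ℂ)‖ ^ 2) ∧
      ∑' k, ‖(inner ℂ (f k) x : ℂ)‖ ^ 2 ≤ B * ‖x‖ ^ 2)
    (Df Dg : ℓ² →L[ℂ] H) (Cf : H →L[ℂ] ℓ²)
    (hDf : ∀ c : ℓ², HasSum (fun k => c k • f k) (Df c))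
    (hDg : ∀ c : ℓ², HasSum (fun k => c k • g k) (Dg c))
    (hCf : ∀ (x : H) (k : ℕ), Cf x k = (inner ℂ (f k) x : ℂ))
    (hgspan : (Submodule.span ℂ (Set.range g)).topologicalClosure = ⊤)
    (hgRiesz : ∀ c : ℓ², A' * ‖c‖ ^ 2 ≤ ‖Dg c‖ ^ 2 ∧ ‖Dg c‖ ^ 2 ≤ B' * ‖c‖ ^ 2)
    (U : ℓ² →L[ℂ] ℓ²) (hU : Function.Bijective (U : ℓ² → ℓ²)) :
    IsUnit (Dg.comp (U.comp Cf)) ↔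
      ((Submodule.span ℂ (Set.range f)).topologicalClosure = ⊤ ∧
        ∃ A₁ > (0 : ℝ), ∃ B₁ > (0 : ℝ), ∀ c : ℓ²,
          A₁ * ‖c‖ ^ 2 ≤ ‖Df c‖ ^ 2 ∧ ‖Df c‖ ^ 2 ≤ B₁ * ‖c‖ ^ 2) := by
  classical
  -- Dg is bijective
  have hDgbij : Function.Bijective ⇑Dg :=
    aux_bij Dg A' hA' (fun c => (hgRiesz c).1) (aux_dense g Dg hDg hgspan)
  -- Df is the adjoint of Cf
  have hadj : Df = ContinuousLinearMap.adjoint Cf := by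
    rw [ContinuousLinearMap.eq_adjoint_iff]
    intro c y
    have h1 : HasSum (fun k => (inner ℂ y (c k • f k) : ℂ)) (inner ℂ y (Df c)) :=
      (innerSL ℂ y).hasSum (hDf c)
    have h2 : HasSum (fun k => (starRingEnd ℂ) (inner ℂ y (c k • f k) : ℂ))
        ((starRingEnd ℂ) (inner ℂ y (Df c) : ℂ)) :=
      h1.map (starRingEnd ℂ) (RCLike.continuous_conj)
    have h3 : HasSum (fun k => (inner ℂ (c k) ((Cf y) k) : ℂ)) (inner ℂ c (Cf y)) :=
      lp.hasSum_inner c (Cf y)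
    have he : (fun k => (starRingEnd ℂ) (inner ℂ y (c k • f k) : ℂ))
        = fun k => (inner ℂ (c k) ((Cf y) k) : ℂ) := by
      funext k
      rw [hCf, inner_smul_right, map_mul, ← inner_conj_symm y (f k)]
      simp [RCLike.inner_apply, mul_comm]
    rw [he] at h2
    have h4 := h2.unique h3
    rw [inner_conj_symm] at h4
    exact h4
  constructor
  · -- forward
    intro hM
    have hMbij : Function.Bijective ⇑(Dg.comp (U.comp Cf)) :=
      ContinuousLinearMap.isUnit_iff_bijective.mp hM
    have hMeq : ∀ x : H, (Dg.comp (U.comp Cf)) x = Dg (U (Cf x)) := fun x => rfl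
    have hCfinj : Function.Injective ⇑Cf := by
      intro x y hxy
      exact hMbij.1 (by rw [hMeq, hMeq, hxy])
    have hCfsurj : Function.Surjective ⇑Cf := by
      intro c
      obtain ⟨x, hx⟩ := hMbij.2 (Dg (U c))
      rw [hMeq] at hx
      exact ⟨x, hU.1 (hDgbij.1 hx)⟩
    -- the inverse of Cf as a continuous linear equiv
    let ecf : H ≃L[ℂ] ℓ² := ContinuousLinearEquiv.ofBijective Cf
      ((LinearMap.ker_eq_bot (f := (Cf : H →ₗ[ℂ] ℓ²))).mpr hCfinj) (LinearMap.range_eq_top.mpr hCfsurj)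
    set G : H →L[ℂ] ℓ² := ContinuousLinearMap.adjoint (ecf.symm : ℓ² →L[ℂ] H) with hG
    have h0 : Cf.comp (ecf.symm : ℓ² →L[ℂ] H) = ContinuousLinearMap.id ℂ ℓ² := by
      ext c
      have : Cf (ecf.symm c) = ecf (ecf.symm c) := rfl
      simp [this]
    have hGDf : G.comp Df = ContinuousLinearMap.id ℂ ℓ² := by
      rw [hadj, hG, ← ContinuousLinearMap.adjoint_comp, h0, ContinuousLinearMap.adjoint_id]
    have hGDf' : ∀ c : ℓ², G (Df c) = c := by
      intro c
      have := congrArg (fun T : ℓ² →L[ℂ] ℓ² => T c) hGDf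
      simpa using this
    have hGpos : 0 < ‖G‖ := by
      rcases eq_or_lt_of_le (norm_nonneg G) with h | h
      · exfalso
        have hG0 : G = 0 := by
          rw [← ContinuousLinearMap.opNorm_zero_iff]; exact h.symm
        have h1 : (lp.single 2 0 (1:ℂ) : ℓ²) = 0 := by
          rw [← hGDf' (lp.single 2 0 1), hG0]; simp
        have h2 : (lp.single 2 0 (1:ℂ) : ℓ²) 0 = 1 := lp.single_apply_self 2 0 1
        rw [h1] at h2
        simp at h2
      · exact h
    constructor
    · -- span density of f
      rw [Submodule.topologicalClosure_eq_top_iff]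
      rw [Submodule.eq_bot_iff]
      intro x hx
      have hxk : ∀ k, (inner ℂ (f k) x : ℂ) = 0 := by
        intro k
        exact (Submodule.mem_orthogonal _ x).mp hx (f k)
          (Submodule.subset_span (Set.mem_range_self k))
      have : Cf x = 0 := by
        apply lp.ext
        funext k
        rw [hCf, hxk]
        rfl
      exact hCfinj (by rw [this]; simp)
    · refine ⟨(‖G‖ ^ 2)⁻¹, by positivity, ‖Df‖ ^ 2 + 1, by positivity, fun c => ?_⟩
      constructor
      · have h1 : ‖c‖ ≤ ‖G‖ * ‖Df c‖ := by
          calc ‖c‖ = ‖G (Df c)‖ := by rw [hGDf' c]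
          _ ≤ ‖G‖ * ‖Df c‖ := G.le_opNorm _
        have h2 : ‖c‖ ^ 2 ≤ ‖G‖ ^ 2 * ‖Df c‖ ^ 2 := by
          nlinarith [norm_nonneg c, norm_nonneg (Df c), hGpos.le]
        rw [inv_mul_le_iff₀ (by positivity)]
        linarith [h2]
      · have h1 : ‖Df c‖ ≤ ‖Df‖ * ‖c‖ := Df.le_opNorm c
        have h2 : ‖Df c‖ ^ 2 ≤ (‖Df‖ * ‖c‖) ^ 2 := pow_le_pow_left₀ (norm_nonneg _) h1 2
        rw [mul_pow] at h2
        have h3 : ‖Df‖ ^ 2 * ‖c‖ ^ 2 ≤ (‖Df‖ ^ 2 + 1) * ‖c‖ ^ 2 :=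
          mul_le_mul_of_nonneg_right (by linarith) (by positivity)
        linarith
  · -- backward
    rintro ⟨hspan, A₁, hA₁, B₁, hB₁, hbnd⟩
    have hDfbij : Function.Bijective ⇑Df :=
      aux_bij Df A₁ hA₁ (fun c => (hbnd c).1) (aux_dense f Df hDf hspan)
    let edf : ℓ² ≃L[ℂ] H := ContinuousLinearEquiv.ofBijective Df
      ((LinearMap.ker_eq_bot (f := (Df : ℓ² →ₗ[ℂ] H))).mpr hDfbij.1) (LinearMap.range_eq_top.mpr hDfbij.2)
    have hCfeq : Cf = ContinuousLinearMap.adjoint Df := by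
      rw [hadj, ContinuousLinearMap.adjoint_adjoint]
    set K : ℓ² →L[ℂ] H := ContinuousLinearMap.adjoint (edf.symm : H →L[ℂ] ℓ²) with hK
    have h0 : Df.comp (edf.symm : H →L[ℂ] ℓ²) = ContinuousLinearMap.id ℂ H := by
      ext x
      have : Df (edf.symm x) = edf (edf.symm x) := rfl
      simp [this]
    have h0' : (edf.symm : H →L[ℂ] ℓ²).comp Df = ContinuousLinearMap.id ℂ ℓ² := by
      refine ContinuousLinearMap.ext fun c => ?_
      show (edf.symm : H →L[ℂ] ℓ²) (Df c) = c
      have : (edf.symm : H →L[ℂ] ℓ²) (Df c) = edf.symm (edf c) := rfl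
      rw [this, ContinuousLinearEquiv.symm_apply_apply]
    have hKCf : K.comp Cf = ContinuousLinearMap.id ℂ H := by
      rw [hCfeq, hK, ← ContinuousLinearMap.adjoint_comp, h0, ContinuousLinearMap.adjoint_id]
    have hCfK : Cf.comp K = ContinuousLinearMap.id ℂ ℓ² := by
      rw [hCfeq, hK, ← ContinuousLinearMap.adjoint_comp, h0', ContinuousLinearMap.adjoint_id]
    have hCfbij : Function.Bijective ⇑Cf := by
      refine Function.bijective_iff_has_inverse.mpr ⟨⇑K, fun x => ?_, fun c => ?_⟩
      · have := congrArg (fun T : H →L[ℂ] H => T x) hKCf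
        simpa using this
      · have := congrArg (fun T : ℓ² →L[ℂ] ℓ² => T c) hCfK
        simpa using this
    rw [ContinuousLinearMap.isUnit_iff_bijective]
    have : ⇑(Dg.comp (U.comp Cf)) = ⇑Dg ∘ ⇑U ∘ ⇑Cf := rfl
    rw [this]
    exact hDgbij.comp (hU.comp hCfbij)
end
end

section
/- Let (f_k)_{k∈ℕ} ⊂ H₁ be a Bessel sequence with bound B, U a bounded operator on ℓ²(ℕ), and (g_k)_{k∈ℕ}, (g'_k)_{k∈ℕ} ⊂ H₂ two Bessel sequences with ∑_k ‖g'_k − g_k‖² < ∞. Then for every orthonormal basis (e_n)_{n∈ℕ} of H₁, ∑_n ‖(M_{U,(g'_k),(f_k)} − M_{U,(g_k),(f_k)})(e_n)‖² ≤ B‖U‖² · ∑_k ‖g'_k − g_k‖²; in particular, the difference of the two generalized Bessel multipliers is a Hilbert–Schmidt operator whose Hilbert–Schmidt norm is at most √B·‖U‖·(∑_k ‖g'_k − g_k‖²)^{1/2}. -/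
noncomputable section

local notation "ℓ²" => lp (fun _ : ℕ => ℂ) 2


private lemma aux_parseval {E ι : Type*} [NormedAddCommGroup E] [InnerProductSpace ℂ E]
    [CompleteSpace E] (b : HilbertBasis ι ℂ E) (x : E) :
    HasSum (fun i => ‖(inner ℂ (b i) x : ℂ)‖ ^ 2) (‖x‖ ^ 2) := by
  have h := b.hasSum_inner_mul_inner x x
  have h2 := (Complex.reCLM : ℂ →L[ℝ] ℝ).hasSum h
  simp only [Complex.reCLM_apply] at h2
  convert h2 using 2 with i
  · rw [← inner_conj_symm x (b i), RCLike.conj_mul]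
    norm_cast
  · rw [← inner_self_eq_norm_sq (𝕜 := ℂ)]; rfl

private lemma aux_lp (c : ℓ²) : HasSum (fun k => ‖c k‖ ^ 2) (‖c‖ ^ 2) := by
  have h := lp.hasSum_inner (𝕜 := ℂ) c c
  have h2 := (Complex.reCLM : ℂ →L[ℝ] ℝ).hasSum h
  simp only [Complex.reCLM_apply] at h2
  convert h2 using 2 with k
  · rw [← inner_self_eq_norm_sq (𝕜 := ℂ)]; rfl
  · rw [← inner_self_eq_norm_sq (𝕜 := ℂ)]; rfl

private lemma aux_ofReal_tsum {ι : Type*} {f : ι → ℝ} {a : ℝ} (h : HasSum f a)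
    (hf : ∀ i, 0 ≤ f i) :
    ∑' i, ENNReal.ofReal (f i) = ENNReal.ofReal a := by
  rw [← ENNReal.ofReal_tsum_of_nonneg hf h.summable, h.tsum_eq]

private lemma aux_ofReal_norm_sq {E : Type*} [NormedAddCommGroup E] (x : E) :
    ENNReal.ofReal (‖x‖ ^ 2) = ((‖x‖₊ ^ 2 : NNReal) : ENNReal) := by
  rw [ENNReal.ofReal_pow (norm_nonneg _), ofReal_norm]
  push_cast
  rfl

set_option maxHeartbeats 1000000 in
/-- Let `(f k) ⊂ H₁` be a Bessel sequence with bound `B`, `U` a bounded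
operator on `ℓ²(ℕ)`, and `(g k), (g' k) ⊂ H₂` two Bessel sequences with
`∑ₖ ‖g' k − g k‖² < ∞`. Then for every orthonormal (Hilbert) basis `(eₙ)` of `H₁`,
`∑ₙ ‖(M_{U,(g' k),(f k)} − M_{U,(g k),(f k)}) eₙ‖² ≤ B ‖U‖² ∑ₖ ‖g' k − g k‖²`; in
particular the difference of the two multipliers is Hilbert–Schmidt with Hilbert–Schmidt
norm at most `√B ‖U‖ (∑ₖ ‖g' k − g k‖²)^{1/2}`. -/
theorem generalized_multiplier_hilbert_schmidt_perturbation
    {H₁ H₂ : Type*} [NormedAddCommGroup H₁] [InnerProductSpace ℂ H₁] [CompleteSpace H₁]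
    [NormedAddCommGroup H₂] [InnerProductSpace ℂ H₂] [CompleteSpace H₂]
    (f : ℕ → H₁) (g g' : ℕ → H₂) (B Bg Bg' : ℝ) (hB : 0 < B) (hBg : 0 < Bg) (hBg' : 0 < Bg')
    (hf : ∀ x : H₁, Summable (fun k => ‖(inner ℂ (f k) x : ℂ)‖ ^ 2) ∧
      ∑' k, ‖(inner ℂ (f k) x : ℂ)‖ ^ 2 ≤ B * ‖x‖ ^ 2)
    (hg : ∀ y : H₂, Summable (fun k => ‖(inner ℂ (g k) y : ℂ)‖ ^ 2) ∧
      ∑' k, ‖(inner ℂ (g k) y : ℂ)‖ ^ 2 ≤ Bg * ‖y‖ ^ 2)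
    (hg' : ∀ y : H₂, Summable (fun k => ‖(inner ℂ (g' k) y : ℂ)‖ ^ 2) ∧
      ∑' k, ‖(inner ℂ (g' k) y : ℂ)‖ ^ 2 ≤ Bg' * ‖y‖ ^ 2)
    (hdiff : Summable (fun k => ‖g' k - g k‖ ^ 2))
    (U : ℓ² →L[ℂ] ℓ²)
    (C : H₁ →L[ℂ] ℓ²) (D D' : ℓ² →L[ℂ] H₂)
    (hC : ∀ (x : H₁) (k : ℕ), C x k = (inner ℂ (f k) x : ℂ))
    (hD : ∀ c : ℓ², HasSum (fun k => c k • g k) (D c))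
    (hD' : ∀ c : ℓ², HasSum (fun k => c k • g' k) (D' c)) :
    ∀ e : HilbertBasis ℕ ℂ H₁,
      Summable (fun n => ‖(D'.comp (U.comp C) - D.comp (U.comp C)) (e n)‖ ^ 2) ∧
      ∑' n, ‖(D'.comp (U.comp C) - D.comp (U.comp C)) (e n)‖ ^ 2 ≤
        B * ‖U‖ ^ 2 * ∑' k, ‖g' k - g k‖ ^ 2 := by
  intro e
  set A : H₁ →L[ℂ] ℓ² := U.comp C with hAdef
  set S : ℓ² →L[ℂ] H₂ := D' - D with hSdef
  set T : H₁ →L[ℂ] H₂ := D'.comp (U.comp C) - D.comp (U.comp C) with hTdef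
  have hTSA : T = S.comp A := by
    ext x
    simp [hTdef, hSdef, hAdef]
  -- S on single sequences
  have hS : ∀ c : ℓ², HasSum (fun k => c k • (g' k - g k)) (S c) := by
    intro c
    have := (hD' c).sub (hD c)
    simpa [hSdef, smul_sub] using this
  have hSsingle : ∀ k : ℕ, S (lp.single 2 k (1 : ℂ)) = g' k - g k := by
    intro k
    refine (hS _).unique ?_
    have h0 : HasSum (fun j => if j = k then g' k - g k else 0) (g' k - g k) :=
      hasSum_ite_eq k _
    have hfun : (fun j => ((lp.single 2 k (1 : ℂ)) : ℓ²) j • (g' j - g j))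
        = fun j => if j = k then g' k - g k else 0 := by
      funext j
      by_cases hj : j = k
      · subst hj; simp [lp.single_apply]
      · simp [lp.single_apply, hj]
    exact hfun ▸ h0
  -- coordinates of the adjoint of S
  have hSadj : ∀ (y : H₂) (k : ℕ),
      (ContinuousLinearMap.adjoint S y) k = (inner ℂ (g' k - g k) y : ℂ) := by
    intro y k
    have h1 : (ContinuousLinearMap.adjoint S y) k
        = (inner ℂ (lp.single 2 k (1 : ℂ)) (ContinuousLinearMap.adjoint S y) : ℂ) := by
      rw [lp.inner_single_left]
      simp [inner]
    rw [h1, ContinuousLinearMap.adjoint_inner_right, hSsingle k]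
  -- norm bound for C
  have hCx : ∀ x : H₁, ‖C x‖ ^ 2 ≤ B * ‖x‖ ^ 2 := by
    intro x
    rw [← (aux_lp (C x)).tsum_eq]
    calc ∑' k, ‖C x k‖ ^ 2 = ∑' k, ‖(inner ℂ (f k) x : ℂ)‖ ^ 2 := by
          exact tsum_congr fun k => by rw [hC]
      _ ≤ B * ‖x‖ ^ 2 := (hf x).2
  have hnC : ‖C‖ ≤ Real.sqrt B := by
    refine C.opNorm_le_bound (Real.sqrt_nonneg B) (fun x => ?_)
    have h2 : ‖C x‖ ^ 2 ≤ (Real.sqrt B * ‖x‖) ^ 2 := by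
      rw [mul_pow, Real.sq_sqrt hB.le]; exact hCx x
    have := Real.sqrt_le_sqrt h2
    rwa [Real.sqrt_sq (norm_nonneg _), Real.sqrt_sq (by positivity)] at this
  -- norm bound for the adjoint of A
  have hAadj : ∀ z : ℓ², ‖ContinuousLinearMap.adjoint A z‖ ^ 2 ≤ B * ‖U‖ ^ 2 * ‖z‖ ^ 2 := by
    intro z
    have h1 : ‖ContinuousLinearMap.adjoint A z‖ ≤ ‖A‖ * ‖z‖ := by
      calc ‖ContinuousLinearMap.adjoint A z‖ ≤ ‖ContinuousLinearMap.adjoint A‖ * ‖z‖ :=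
            (ContinuousLinearMap.adjoint A).le_opNorm z
        _ = ‖A‖ * ‖z‖ := by rw [LinearIsometryEquiv.norm_map ContinuousLinearMap.adjoint A]
    have h2 : ‖A‖ ≤ ‖U‖ * Real.sqrt B := by
      calc ‖A‖ ≤ ‖U‖ * ‖C‖ := U.opNorm_comp_le C
        _ ≤ ‖U‖ * Real.sqrt B := by
            exact mul_le_mul_of_nonneg_left hnC (norm_nonneg U)
    have h3 : ‖ContinuousLinearMap.adjoint A z‖ ≤ ‖U‖ * Real.sqrt B * ‖z‖ :=
      h1.trans (by
        exact mul_le_mul_of_nonneg_right h2 (norm_nonneg z))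
    have h4 : (‖U‖ * Real.sqrt B * ‖z‖) ^ 2 = B * ‖U‖ ^ 2 * ‖z‖ ^ 2 := by
      rw [mul_pow, mul_pow, Real.sq_sqrt hB.le]; ring
    calc ‖ContinuousLinearMap.adjoint A z‖ ^ 2 ≤ (‖U‖ * Real.sqrt B * ‖z‖) ^ 2 :=
          pow_le_pow_left₀ (norm_nonneg _) h3 2
      _ = B * ‖U‖ ^ 2 * ‖z‖ ^ 2 := h4
  -- Hilbert basis of H₂
  obtain ⟨w, u, -⟩ := exists_hilbertBasis ℂ H₂
  -- ENNReal chain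
  have key :
      (∑' n, ENNReal.ofReal (‖T (e n)‖ ^ 2))
        ≤ ENNReal.ofReal (B * ‖U‖ ^ 2 * ∑' k, ‖g' k - g k‖ ^ 2) := by
    have step1 : (∑' n, ENNReal.ofReal (‖T (e n)‖ ^ 2))
        = ∑' (i : w), ENNReal.ofReal (‖(ContinuousLinearMap.adjoint T) (u i)‖ ^ 2) := by
      calc (∑' n, ENNReal.ofReal (‖T (e n)‖ ^ 2))
          = ∑' n, ∑' (i : w), ENNReal.ofReal (‖(inner ℂ (u i) (T (e n)) : ℂ)‖ ^ 2) := by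
            refine tsum_congr fun n => ?_
            exact (aux_ofReal_tsum (aux_parseval u (T (e n))) (fun i => sq_nonneg _)).symm
        _ = ∑' (i : w), ∑' n, ENNReal.ofReal (‖(inner ℂ (u i) (T (e n)) : ℂ)‖ ^ 2) :=
            ENNReal.tsum_comm
        _ = ∑' (i : w), ENNReal.ofReal (‖(ContinuousLinearMap.adjoint T) (u i)‖ ^ 2) := by
            refine tsum_congr fun i => ?_
            have heq : ∀ n, ‖(inner ℂ (u i) (T (e n)) : ℂ)‖
                = ‖(inner ℂ (e n) ((ContinuousLinearMap.adjoint T) (u i)) : ℂ)‖ := by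
              intro n
              rw [← ContinuousLinearMap.adjoint_inner_left]
              exact (norm_inner_symm _ _).symm
            calc ∑' n, ENNReal.ofReal (‖(inner ℂ (u i) (T (e n)) : ℂ)‖ ^ 2)
                = ∑' n, ENNReal.ofReal
                    (‖(inner ℂ (e n) ((ContinuousLinearMap.adjoint T) (u i)) : ℂ)‖ ^ 2) := by
                  exact tsum_congr fun n => by rw [heq n]
              _ = ENNReal.ofReal (‖(ContinuousLinearMap.adjoint T) (u i)‖ ^ 2) :=
                  aux_ofReal_tsum (aux_parseval e _) (fun n => sq_nonneg _)
    have step2 : ∀ i : w, ENNReal.ofReal (‖(ContinuousLinearMap.adjoint T) (u i)‖ ^ 2)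
        ≤ ENNReal.ofReal (B * ‖U‖ ^ 2)
            * ENNReal.ofReal (‖(ContinuousLinearMap.adjoint S) (u i)‖ ^ 2) := by
      intro i
      have hadj : ContinuousLinearMap.adjoint T (u i)
          = ContinuousLinearMap.adjoint A (ContinuousLinearMap.adjoint S (u i)) := by
        rw [hTSA, ContinuousLinearMap.adjoint_comp]
        rfl
      rw [hadj, ← ENNReal.ofReal_mul (by positivity)]
      exact ENNReal.ofReal_le_ofReal (hAadj _)
    have step3 : (∑' (i : w), ENNReal.ofReal (‖(ContinuousLinearMap.adjoint S) (u i)‖ ^ 2))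
        = ∑' k, ENNReal.ofReal (‖g' k - g k‖ ^ 2) := by
      calc (∑' (i : w), ENNReal.ofReal (‖(ContinuousLinearMap.adjoint S) (u i)‖ ^ 2))
          = ∑' (i : w), ∑' k,
              ENNReal.ofReal (‖(ContinuousLinearMap.adjoint S (u i)) k‖ ^ 2) := by
            refine tsum_congr fun i => ?_
            exact (aux_ofReal_tsum (aux_lp _) (fun k => sq_nonneg _)).symm
        _ = ∑' k, ∑' (i : w),
              ENNReal.ofReal (‖(ContinuousLinearMap.adjoint S (u i)) k‖ ^ 2) :=
            ENNReal.tsum_comm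
        _ = ∑' k, ENNReal.ofReal (‖g' k - g k‖ ^ 2) := by
            refine tsum_congr fun k => ?_
            calc (∑' (i : w),
                  ENNReal.ofReal (‖(ContinuousLinearMap.adjoint S (u i)) k‖ ^ 2))
                = ∑' (i : w), ENNReal.ofReal (‖(inner ℂ (u i) (g' k - g k) : ℂ)‖ ^ 2) := by
                  refine tsum_congr fun i => ?_
                  rw [hSadj, norm_inner_symm]
              _ = ENNReal.ofReal (‖g' k - g k‖ ^ 2) :=
                  aux_ofReal_tsum (aux_parseval u _) (fun i => sq_nonneg _)
    calc (∑' n, ENNReal.ofReal (‖T (e n)‖ ^ 2))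
        = ∑' (i : w), ENNReal.ofReal (‖(ContinuousLinearMap.adjoint T) (u i)‖ ^ 2) := step1
      _ ≤ ∑' (i : w), ENNReal.ofReal (B * ‖U‖ ^ 2)
            * ENNReal.ofReal (‖(ContinuousLinearMap.adjoint S) (u i)‖ ^ 2) :=
          ENNReal.tsum_le_tsum step2
      _ = ENNReal.ofReal (B * ‖U‖ ^ 2)
            * ∑' (i : w), ENNReal.ofReal (‖(ContinuousLinearMap.adjoint S) (u i)‖ ^ 2) :=
          ENNReal.tsum_mul_left
      _ = ENNReal.ofReal (B * ‖U‖ ^ 2) * ∑' k, ENNReal.ofReal (‖g' k - g k‖ ^ 2) := by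
          rw [step3]
      _ = ENNReal.ofReal (B * ‖U‖ ^ 2) * ENNReal.ofReal (∑' k, ‖g' k - g k‖ ^ 2) := by
          rw [aux_ofReal_tsum hdiff.hasSum (fun k => sq_nonneg _)]
      _ = ENNReal.ofReal (B * ‖U‖ ^ 2 * ∑' k, ‖g' k - g k‖ ^ 2) := by
          rw [← ENNReal.ofReal_mul (by positivity)]
  -- summability
  have hne : (∑' n, ENNReal.ofReal (‖T (e n)‖ ^ 2)) ≠ ⊤ :=
    ne_top_of_le_ne_top ENNReal.ofReal_ne_top key
  have hsum : Summable (fun n => ‖T (e n)‖ ^ 2) := by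
    have hco : (∑' n, ((‖T (e n)‖₊ ^ 2 : NNReal) : ENNReal)) ≠ ⊤ := by
      have heq : (∑' n, ((‖T (e n)‖₊ ^ 2 : NNReal) : ENNReal))
          = ∑' n, ENNReal.ofReal (‖T (e n)‖ ^ 2) :=
        tsum_congr fun n => (aux_ofReal_norm_sq _).symm
      rw [heq]
      exact hne
    have hnn := ENNReal.tsum_coe_ne_top_iff_summable.mp hco
    have h2 := NNReal.summable_coe.mpr hnn
    refine h2.congr fun n => ?_
    rw [NNReal.coe_pow, coe_nnnorm]
  refine ⟨hsum, ?_⟩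
  have hofReal : ENNReal.ofReal (∑' n, ‖T (e n)‖ ^ 2)
      = ∑' n, ENNReal.ofReal (‖T (e n)‖ ^ 2) :=
    (aux_ofReal_tsum hsum.hasSum (fun n => sq_nonneg _)).symm
  have hfin : ENNReal.ofReal (∑' n, ‖T (e n)‖ ^ 2)
      ≤ ENNReal.ofReal (B * ‖U‖ ^ 2 * ∑' k, ‖g' k - g k‖ ^ 2) := hofReal ▸ key
  have hrhs : 0 ≤ B * ‖U‖ ^ 2 * ∑' k, ‖g' k - g k‖ ^ 2 := by
    have : 0 ≤ ∑' k, ‖g' k - g k‖ ^ 2 := tsum_nonneg fun k => sq_nonneg _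
    positivity
  exact (ENNReal.ofReal_le_ofReal_iff hrhs).mp hfin
end
end
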